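/- arXiv:2509.25565 — 9 statements merged into one kernel-verified Lean document; each statement's English description precedes it below -/
import Mathlib

section
/- The continuous framing-only optimization problem is equivalent to a Bayesian Stackelberg game: let P(s) = Σ_ω μ₀(ω)π(s|ω) and assume P(s) > 0 for every s ∈ 𝒮; define leader utility ũ(a,s) = Σ_ω (μ₀(ω)π(s|ω)/P(s))·u(a,ω) and type-s follower utility ṽ^s(a,ω) = π(s|ω)v(a,ω). Then for every x ∈ Δ(Ω) and every s ∈ 𝒮, the set argmax_{a∈𝒜} Σ_ω x(ω)π(s|ω)v(a,ω) coincides with the follower's best-response set argmax_{a∈𝒜} Σ_ω x(ω)ṽ^s(a,ω), and for any selection a*(s) from these sets, Σ_ω Σ_s μ₀(ω)π(s|ω)u(a*(s),ω) = Σ_s P(s)·ũ(a*(s),s). Consequently the optimal value of the framing-only problem max_{μ_c ∈ Δ(Ω)} Σ_ω Σ_s μ₀(ω)π(s|ω)u(a*_{μ_c,s},ω) equals the leader's optimal value in this Bayesian Stackelberg game with types 𝒮 drawn with probabilities P(s). -/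
open Finset

/-- The continuous framing-only optimization problem is equivalent to a
Bayesian Stackelberg game: the best-response sets coincide, the objectives coincide on any
selection, and hence the optimal values of the two problems are equal. -/
theorem framing_only_equiv_bayesian_stackelberg
    {Ω 𝒜 𝒮 : Type*} [Fintype Ω] [Fintype 𝒜] [Fintype 𝒮]
    [Nonempty Ω] [Nonempty 𝒜] [Nonempty 𝒮]
    (u v : 𝒜 → Ω → ℝ)
    (hu : ∀ a ω, u a ω ∈ Set.Icc (0:ℝ) 1)
    (hv : ∀ a ω, v a ω ∈ Set.Icc (0:ℝ) 1)
    -- sender prior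
    (μ₀ : Ω → ℝ) (hμ₀pos : ∀ ω, 0 < μ₀ ω) (hμ₀sum : ∑ ω, μ₀ ω = 1)
    -- fixed signaling scheme
    (π : Ω → 𝒮 → ℝ) (hπ : ∀ ω s, 0 ≤ π ω s) (hπsum : ∀ ω, ∑ s, π ω s = 1)
    -- type distribution P(s) = Σ_ω μ₀(ω) π(s|ω), assumed positive
    (P : 𝒮 → ℝ) (hP : ∀ s, P s = ∑ ω, μ₀ ω * π ω s) (hPpos : ∀ s, 0 < P s)
    -- leader utility ũ(a,s) = Σ_ω (μ₀(ω)π(s|ω)/P(s))·u(a,ω)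
    (util : 𝒜 → 𝒮 → ℝ) (hutil : ∀ a s, util a s = ∑ ω, (μ₀ ω * π ω s / P s) * u a ω)
    -- type-s follower utility ṽ^s(a,ω) = π(s|ω)·v(a,ω)
    (vtil : 𝒮 → 𝒜 → Ω → ℝ) (hvtil : ∀ s a ω, vtil s a ω = π ω s * v a ω) :
    -- (1) the best-response sets coincide for every leader mixed strategy x and type s
    (∀ (x : Ω → ℝ) (s : 𝒮),
      {a : 𝒜 | ∀ a', ∑ ω, x ω * π ω s * v a' ω ≤ ∑ ω, x ω * π ω s * v a ω} =
      {a : 𝒜 | ∀ a', ∑ ω, x ω * vtil s a' ω ≤ ∑ ω, x ω * vtil s a ω}) ∧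
    -- (2) the objectives agree for any selection a* : 𝒮 → 𝒜
    (∀ astar : 𝒮 → 𝒜,
      ∑ ω, ∑ s, μ₀ ω * π ω s * u (astar s) ω = ∑ s, P s * util (astar s) s) ∧
    -- (3) the optimal value of the framing-only problem equals the leader's optimal value
    sSup {r : ℝ | ∃ x : Ω → ℝ, (∀ ω, 0 ≤ x ω) ∧ (∑ ω, x ω = 1) ∧
        ∃ astar : 𝒮 → 𝒜,
          (∀ s a, ∑ ω, x ω * π ω s * v a ω ≤ ∑ ω, x ω * π ω s * v (astar s) ω) ∧
          (∀ s a, ∑ ω, x ω * π ω s * v a ω = ∑ ω, x ω * π ω s * v (astar s) ω →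
            ∑ ω, μ₀ ω * π ω s * u a ω ≤ ∑ ω, μ₀ ω * π ω s * u (astar s) ω) ∧
          r = ∑ ω, ∑ s, μ₀ ω * π ω s * u (astar s) ω} =
    sSup {r : ℝ | ∃ x : Ω → ℝ, (∀ ω, 0 ≤ x ω) ∧ (∑ ω, x ω = 1) ∧
        ∃ astar : 𝒮 → 𝒜,
          (∀ s a, ∑ ω, x ω * vtil s a ω ≤ ∑ ω, x ω * vtil s (astar s) ω) ∧
          (∀ s a, ∑ ω, x ω * vtil s a ω = ∑ ω, x ω * vtil s (astar s) ω →
            util a s ≤ util (astar s) s) ∧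
          r = ∑ s, P s * util (astar s) s} := by
  have key1 : ∀ (x : Ω → ℝ) (s : 𝒮) (a : 𝒜), ∑ ω, x ω * vtil s a ω = ∑ ω, x ω * π ω s * v a ω := by
    intro x s a; apply Finset.sum_congr rfl; intro ω _; rw [hvtil]; ring
  have key2 : ∀ (a : 𝒜) (s : 𝒮), P s * util a s = ∑ ω, μ₀ ω * π ω s * u a ω := by
    intro a s
    have hne : P s ≠ 0 := (hPpos s).ne'
    rw [hutil, Finset.mul_sum]
    apply Finset.sum_congr rfl; intro ω _
    field_simp
  have key3 : ∀ astar : 𝒮 → 𝒜, ∑ ω, ∑ s, μ₀ ω * π ω s * u (astar s) ω = ∑ s, P s * util (astar s) s := by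
    intro astar
    rw [Finset.sum_comm]
    exact Finset.sum_congr rfl fun s _ => (key2 _ s).symm
  refine ⟨fun x s => ?_, key3, ?_⟩
  · ext a; simp only [Set.mem_setOf_eq, key1]
  · congr 1
    ext r
    constructor
    · rintro ⟨x, hx0, hx1, astar, h1, h2, h3⟩
      refine ⟨x, hx0, hx1, astar, ?_, ?_, ?_⟩
      · intro s a; rw [key1, key1]; exact h1 s a
      · intro s a h
        have h' := h2 s a (by rw [← key1, ← key1]; exact h)
        have h'' : P s * util a s ≤ P s * util (astar s) s := by rw [key2, key2]; exact h'
        exact le_of_mul_le_mul_left h'' (hPpos s)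
      · rw [h3, key3]
    · rintro ⟨x, hx0, hx1, astar, h1, h2, h3⟩
      refine ⟨x, hx0, hx1, astar, ?_, ?_, ?_⟩
      · intro s a; rw [← key1, ← key1]; exact h1 s a
      · intro s a h
        have h' := h2 s a (by rw [key1, key1]; exact h)
        have h'' : P s * util a s ≤ P s * util (astar s) s :=
          mul_le_mul_of_nonneg_left h' (hPpos s).le
        rw [key2, key2] at h''; exact h''
      · rw [h3, ← key3]
end

section
/- Local Lipschitz continuity of the optimal sender utility in the receiver's prior: suppose v has inducibility margin D > 0, and let μ ∈ Δ(Ω) satisfy μ(ω) ≥ 2p₀ > 0 for every ω ∈ Ω. Then for every μ' ∈ Δ(Ω) with ‖μ' − μ‖₁ ≤ ε, where 0 < ε < min{p₀, p₀²D/2}, one has |U*(μ') − U*(μ)| ≤ 4ε/(p₀²D). In particular U* is locally Lipschitz continuous on the interior of the simplex Δ(Ω). -/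
open Finset
open scoped Classical

noncomputable def Ustar {Ω 𝒜 : Type*} [Fintype Ω] [Fintype 𝒜]
    (u v : 𝒜 → Ω → ℝ) (μ₀ : Ω → ℝ) (μ : Ω → ℝ) : ℝ :=
  sSup {r : ℝ | ∃ π : Ω → 𝒜 → ℝ,
    (∀ ω a, 0 ≤ π ω a) ∧ (∀ ω, ∑ a, π ω a = 1) ∧
    (∀ a a', 0 ≤ ∑ ω, μ ω * π ω a * (v a ω - v a' ω)) ∧
    r = ∑ ω, ∑ a, μ₀ ω * π ω a * u a ω}

section Aux

variable {Ω 𝒜 : Type*} [Fintype Ω] [Fintype 𝒜]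

def Feas (u v : 𝒜 → Ω → ℝ) (μ₀ μ : Ω → ℝ) : Set ℝ :=
  {r : ℝ | ∃ π : Ω → 𝒜 → ℝ,
    (∀ ω a, 0 ≤ π ω a) ∧ (∀ ω, ∑ a, π ω a = 1) ∧
    (∀ a a', 0 ≤ ∑ ω, μ ω * π ω a * (v a ω - v a' ω)) ∧
    r = ∑ ω, ∑ a, μ₀ ω * π ω a * u a ω}

lemma Ustar_eq_sSup_Feas (u v : 𝒜 → Ω → ℝ) (μ₀ μ : Ω → ℝ) :
    Ustar u v μ₀ μ = sSup (Feas u v μ₀ μ) := rfl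

lemma Feas_le_one (u v : 𝒜 → Ω → ℝ) (hu : ∀ a ω, u a ω ∈ Set.Icc (0:ℝ) 1)
    (μ₀ μ : Ω → ℝ) (hμ₀ : ∀ ω, 0 ≤ μ₀ ω) (hμ₀sum : ∑ ω, μ₀ ω = 1) :
    ∀ r ∈ Feas u v μ₀ μ, r ≤ 1 := by
  rintro r ⟨π, hπ0, hπ1, -, rfl⟩
  calc ∑ ω, ∑ a, μ₀ ω * π ω a * u a ω ≤ ∑ ω, ∑ a, μ₀ ω * π ω a := by
        apply sum_le_sum; intro ω _; apply sum_le_sum; intro a _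
        have h1 := (hu a ω).2
        nlinarith [mul_nonneg (hμ₀ ω) (hπ0 ω a)]
    _ = ∑ ω, μ₀ ω := by
        apply sum_congr rfl; intro ω _; rw [← mul_sum, hπ1 ω, mul_one]
    _ = 1 := hμ₀sum

lemma Feas_exists_nonneg [Nonempty 𝒜] (u v : 𝒜 → Ω → ℝ)
    (hu : ∀ a ω, u a ω ∈ Set.Icc (0:ℝ) 1)
    (μ₀ μ : Ω → ℝ) (hμ₀ : ∀ ω, 0 ≤ μ₀ ω) (hμ : ∀ ω, 0 ≤ μ ω) :
    ∃ r ∈ Feas u v μ₀ μ, 0 ≤ r := by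
  have hex : ∀ ω : Ω, ∃ b : 𝒜, ∀ a, v a ω ≤ v b ω := by
    intro ω
    obtain ⟨b, -, hb⟩ := Finset.exists_max_image Finset.univ (fun a => v a ω) univ_nonempty
    exact ⟨b, fun a => hb a (mem_univ a)⟩
  choose astar hstar using hex
  refine ⟨_, ⟨fun ω a => if a = astar ω then 1 else 0, ?_, ?_, ?_, rfl⟩, ?_⟩
  · intro ω a; by_cases h : a = astar ω <;> simp [h]
  · intro ω; simp
  · intro a a'
    apply sum_nonneg; intro ω _
    by_cases h : a = astar ω
    · subst h
      have h2 : (0:ℝ) ≤ v (astar ω) ω - v a' ω := by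
        have := hstar ω a'; linarith
      simpa using mul_nonneg (hμ ω) h2
    · simp [h]
  · apply sum_nonneg; intro ω _; apply sum_nonneg; intro a _
    by_cases h : a = astar ω <;> simp [h]
    exact mul_nonneg (hμ₀ ω) ((hu _ ω).1)

/-- Transfer lemma: moving the prior inside the obedience constraint changes the
optimal value by at most `3ε/p₀`. -/
lemma Ustar_le_transfer [Nonempty 𝒜] (u v : 𝒜 → Ω → ℝ)
    (hu : ∀ a ω, u a ω ∈ Set.Icc (0:ℝ) 1)
    (μ₀ : Ω → ℝ) (hμ₀ : ∀ ω, 0 ≤ μ₀ ω) (hμ₀sum : ∑ ω, μ₀ ω = 1)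
    (p₀ ε : ℝ) (hp₀ : 0 < p₀) (hε0 : 0 ≤ ε) (hεp : ε ≤ p₀)
    (ν ν' : Ω → ℝ) (hν : ∀ ω, p₀ ≤ ν ω) (hν' : ∀ ω, p₀ ≤ ν' ω)
    (hclose : ∀ ω, |ν ω - ν' ω| ≤ ε) :
    Ustar u v μ₀ ν ≤ Ustar u v μ₀ ν' + 3 * ε / p₀ := by
  have hex : ∀ ω : Ω, ∃ b : 𝒜, ∀ a, v a ω ≤ v b ω := by
    intro ω
    obtain ⟨b, -, hb⟩ := Finset.exists_max_image Finset.univ (fun a => v a ω) univ_nonempty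
    exact ⟨b, fun a => hb a (mem_univ a)⟩
  choose astar hstar using hex
  have hbdd : BddAbove (Feas u v μ₀ ν') :=
    ⟨1, fun r hr => Feas_le_one u v hu μ₀ ν' hμ₀ hμ₀sum r hr⟩
  obtain ⟨r0, hr0mem, hr00⟩ := Feas_exists_nonneg u v hu μ₀ ν'
    hμ₀ (fun ω => le_trans hp₀.le (hν' ω))
  have hsSup0 : (0:ℝ) ≤ sSup (Feas u v μ₀ ν') :=
    le_trans hr00 (le_csSup hbdd hr0mem)
  rw [Ustar_eq_sSup_Feas, Ustar_eq_sSup_Feas]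
  apply Real.sSup_le _ (by positivity)
  rintro r ⟨π, hπ0, hπ1, hob, rfl⟩
  -- the rescaled scheme
  set t : ℝ := 1 - ε / p₀ with ht
  have ht0 : 0 ≤ t := by
    have h : ε / p₀ ≤ 1 := by rw [div_le_one hp₀]; exact hεp
    rw [ht]; linarith
  have hν'pos : ∀ ω, 0 < ν' ω := fun ω => lt_of_lt_of_le hp₀ (hν' ω)
  have hνpos : ∀ ω, 0 < ν ω := fun ω => lt_of_lt_of_le hp₀ (hν ω)
  set ρ : Ω → ℝ := fun ω => t * ν ω / ν' ω with hρdef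
  have hρ0 : ∀ ω, 0 ≤ ρ ω := fun ω =>
    div_nonneg (mul_nonneg ht0 (hνpos ω).le) (hν'pos ω).le
  have hρ1 : ∀ ω, ρ ω ≤ 1 := by
    intro ω
    rw [hρdef, div_le_one (hν'pos ω)]
    have hd : ν ω - ν' ω ≤ ε := by have := abs_le.1 (hclose ω); linarith
    have hkey : ε ≤ ε * ν ω / p₀ := by
      rw [le_div_iff₀ hp₀]
      exact mul_le_mul_of_nonneg_left (hν ω) hε0
    calc t * ν ω = ν ω - ε * ν ω / p₀ := by rw [ht]; field_simp; try ring
      _ ≤ ν ω - ε := by linarith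
      _ ≤ ν' ω := by linarith
  have hgap : ∀ ω, 1 - ρ ω ≤ 3 * ε / p₀ := by
    intro ω
    have hd2 : ν ω - ν' ω ≤ ε := by have := abs_le.1 (hclose ω); linarith
    have hd : ν' ω - ν ω ≤ ε := by have := abs_le.1 (hclose ω); linarith
    have hεν' : ε ≤ ν' ω := le_trans hεp (hν' ω)
    have h1 : (1 - 3 * ε / p₀) * ν' ω ≤ t * ν ω := by
      have e2 : ε * ε ≤ ε * ν' ω := mul_le_mul_of_nonneg_left hεν' hε0
      have e3 : ε * ν ω ≤ ε * ν' ω + ε * ε := by nlinarith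
      have e5 : ε * ν ω ≤ 2 * (ε * ν' ω) := by linarith
      have key : (p₀ - 3 * ε) * ν' ω ≤ (p₀ - ε) * ν ω := by
        nlinarith [mul_le_mul_of_nonneg_left hd hp₀.le,
          mul_le_mul_of_nonneg_left (hν' ω) hε0]
      have hL : (1 - 3 * ε / p₀) * ν' ω = (p₀ - 3 * ε) * ν' ω / p₀ := by
        field_simp; try ring
      have hR : t * ν ω = (p₀ - ε) * ν ω / p₀ := by
        rw [ht]; field_simp; try ring
      rw [hL, hR, div_le_div_iff₀ hp₀ hp₀]
      nlinarith [mul_le_mul_of_nonneg_right key hp₀.le]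
    have h2 : 1 - 3 * ε / p₀ ≤ ρ ω := by
      rw [hρdef]; exact (le_div_iff₀ (hν'pos ω)).2 h1
    linarith
  -- the new scheme
  set π' : Ω → 𝒜 → ℝ :=
    fun ω a => ρ ω * π ω a + (if a = astar ω then 1 - ρ ω else 0) with hπ'def
  have hπ'0 : ∀ ω a, 0 ≤ π' ω a := by
    intro ω a
    apply add_nonneg (mul_nonneg (hρ0 ω) (hπ0 ω a))
    split
    · linarith [hρ1 ω]
    · exact le_refl 0
  have hπ'1 : ∀ ω, ∑ a, π' ω a = 1 := by
    intro ω
    rw [hπ'def]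
    rw [Finset.sum_add_distrib, ← Finset.mul_sum, hπ1 ω, mul_one,
      Finset.sum_ite_eq' Finset.univ (astar ω) (fun _ => 1 - ρ ω)]
    simp
  have hπ'ob : ∀ a a', 0 ≤ ∑ ω, ν' ω * π' ω a * (v a ω - v a' ω) := by
    intro a a'
    have hterm : ∀ ω, ν' ω * π' ω a * (v a ω - v a' ω) =
        t * (ν ω * π ω a * (v a ω - v a' ω)) +
        (ν' ω * (1 - ρ ω)) * (if a = astar ω then v a ω - v a' ω else 0) := by
      intro ω
      have hne : ν' ω ≠ 0 := (hν'pos ω).ne'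
      by_cases h : a = astar ω <;>
        simp only [hπ'def, hρdef, if_pos, if_neg, h, if_true, if_false] <;>
        field_simp <;> ring
    calc (0:ℝ) ≤ t * (∑ ω, ν ω * π ω a * (v a ω - v a' ω)) +
          ∑ ω, (ν' ω * (1 - ρ ω)) * (if a = astar ω then v a ω - v a' ω else 0) := by
          apply add_nonneg (mul_nonneg ht0 (hob a a'))
          apply sum_nonneg; intro ω _
          by_cases h : a = astar ω
          · subst h
            have h2 : (0:ℝ) ≤ v (astar ω) ω - v a' ω := by
              have := hstar ω a'; linarith
            have h3 : (0:ℝ) ≤ ν' ω * (1 - ρ ω) :=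
              mul_nonneg (hν'pos ω).le (by linarith [hρ1 ω])
            simpa using mul_nonneg h3 h2
          · simp [h]
      _ = ∑ ω, ν' ω * π' ω a * (v a ω - v a' ω) := by
          rw [Finset.mul_sum, ← Finset.sum_add_distrib]
          exact (Finset.sum_congr rfl fun ω _ => (hterm ω).symm)
  have hmem : (∑ ω, ∑ a, μ₀ ω * π' ω a * u a ω) ∈ Feas u v μ₀ ν' :=
    ⟨π', hπ'0, hπ'1, hπ'ob, rfl⟩
  have hpay : (∑ ω, ∑ a, μ₀ ω * π ω a * u a ω) ≤
      (∑ ω, ∑ a, μ₀ ω * π' ω a * u a ω) + 3 * ε / p₀ := by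
    have hdiff : (∑ ω, ∑ a, μ₀ ω * π ω a * u a ω) -
        (∑ ω, ∑ a, μ₀ ω * π' ω a * u a ω) ≤ 3 * ε / p₀ := by
      rw [← Finset.sum_sub_distrib]
      calc ∑ ω, ((∑ a, μ₀ ω * π ω a * u a ω) - ∑ a, μ₀ ω * π' ω a * u a ω)
          = ∑ ω, ∑ a, (μ₀ ω * π ω a * u a ω - μ₀ ω * π' ω a * u a ω) := by
            apply sum_congr rfl; intro ω _; rw [Finset.sum_sub_distrib]
        _ ≤ ∑ ω, ∑ a, μ₀ ω * ((1 - ρ ω) * π ω a) := by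
            apply sum_le_sum; intro ω _; apply sum_le_sum; intro a _
            have hπ'ge : ρ ω * π ω a ≤ π' ω a := by
              simp only [hπ'def]
              have : (0:ℝ) ≤ (if a = astar ω then 1 - ρ ω else 0) := by
                split
                · linarith [hρ1 ω]
                · exact le_refl 0
              linarith
            have hu0 := (hu a ω).1
            have hu1 := (hu a ω).2
            have hμa := hμ₀ ω
            have hπa := hπ0 ω a
            have hρω1 := hρ1 ω
            have hρω0 := hρ0 ω
            nlinarith [mul_le_mul_of_nonneg_left hπ'ge (mul_nonneg hμa hu0),
              mul_nonneg (mul_nonneg hμa (by linarith : (0:ℝ) ≤ 1 - ρ ω)) hπa]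
        _ = ∑ ω, μ₀ ω * (1 - ρ ω) := by
            apply sum_congr rfl; intro ω _
            rw [← Finset.mul_sum, ← Finset.mul_sum, hπ1 ω]
            ring
        _ ≤ ∑ ω, μ₀ ω * (3 * ε / p₀) := by
            apply sum_le_sum; intro ω _
            exact mul_le_mul_of_nonneg_left (hgap ω) (hμ₀ ω)
        _ = 3 * ε / p₀ := by rw [← Finset.sum_mul, hμ₀sum, one_mul]
    linarith
  calc (∑ ω, ∑ a, μ₀ ω * π ω a * u a ω)
      ≤ (∑ ω, ∑ a, μ₀ ω * π' ω a * u a ω) + 3 * ε / p₀ := hpay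
    _ ≤ sSup (Feas u v μ₀ ν') + 3 * ε / p₀ := by
        have := le_csSup hbdd hmem; linarith

end Aux

/-- Local Lipschitz continuity of the optimal sender utility in the
receiver's prior: if `v` has inducibility margin `D > 0` and `μ(ω) ≥ 2p₀ > 0` for all `ω`,
then for any prior `μ'` with `‖μ' − μ‖₁ ≤ ε < min{p₀, p₀²D/2}`, one has
`|U*(μ') − U*(μ)| ≤ 4ε/(p₀²D)`. -/
theorem Ustar_locally_lipschitz
    {Ω 𝒜 : Type*} [Fintype Ω] [Fintype 𝒜] [Nonempty Ω] [Nonempty 𝒜]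
    (u v : 𝒜 → Ω → ℝ)
    (hu : ∀ a ω, u a ω ∈ Set.Icc (0:ℝ) 1)
    (hv : ∀ a ω, v a ω ∈ Set.Icc (0:ℝ) 1)
    (μ₀ : Ω → ℝ) (hμ₀pos : ∀ ω, 0 < μ₀ ω) (hμ₀sum : ∑ ω, μ₀ ω = 1)
    -- inducibility margin D
    (D : ℝ) (hD : 0 < D)
    (hmargin : ∀ a : 𝒜, ∃ η : Ω → ℝ, (∀ ω, 0 ≤ η ω) ∧ (∑ ω, η ω = 1) ∧
      ∀ a', a' ≠ a → D ≤ ∑ ω, η ω * (v a ω - v a' ω))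
    -- the prior μ, bounded below by 2p₀
    (p₀ : ℝ) (hp₀ : 0 < p₀)
    (μ : Ω → ℝ) (hμ : ∀ ω, 0 ≤ μ ω) (hμsum : ∑ ω, μ ω = 1)
    (hμlb : ∀ ω, 2 * p₀ ≤ μ ω)
    -- the nearby prior μ'
    (μ' : Ω → ℝ) (hμ' : ∀ ω, 0 ≤ μ' ω) (hμ'sum : ∑ ω, μ' ω = 1)
    (ε : ℝ) (hε0 : 0 < ε) (hεlt : ε < min p₀ (p₀ ^ 2 * D / 2))
    (hdist : ∑ ω, |μ' ω - μ ω| ≤ ε) :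
    |Ustar u v μ₀ μ' - Ustar u v μ₀ μ| ≤ 4 * ε / (p₀ ^ 2 * D) := by
  have hεp : ε ≤ p₀ := le_of_lt (lt_of_lt_of_le hεlt (min_le_left _ _))
  have hrhs0 : (0:ℝ) ≤ 4 * ε / (p₀ ^ 2 * D) := by positivity
  rcases subsingleton_or_nontrivial 𝒜 with hsub | hnt
  · -- trivial case: only one action, the feasible sets coincide
    have heq : Ustar u v μ₀ μ' = Ustar u v μ₀ μ := by
      unfold Ustar
      congr 1
      ext r
      constructor <;> rintro ⟨π, h1, h2, h3, h4⟩ <;>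
        exact ⟨π, h1, h2, fun a a' => by
          rw [Subsingleton.elim a' a]; simp, h4⟩
    rw [heq, sub_self, abs_zero]
    exact hrhs0
  · -- main case
    obtain ⟨a₀, a₁, hne⟩ := exists_pair_ne 𝒜
    -- D ≤ 1
    have hD1 : D ≤ 1 := by
      obtain ⟨η, hη0, hηsum, hηm⟩ := hmargin a₀
      have h1 : D ≤ ∑ ω, η ω * (v a₀ ω - v a₁ ω) := hηm a₁ (Ne.symm hne)
      have h2 : ∑ ω, η ω * (v a₀ ω - v a₁ ω) ≤ ∑ ω, η ω := by
        apply sum_le_sum; intro ω _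
        have := (hv a₀ ω).2
        have := (hv a₁ ω).1
        nlinarith [hη0 ω]
      rw [hηsum] at h2
      linarith
    -- p₀ ≤ 1/2
    have hp₀half : p₀ ≤ 1 / 2 := by
      obtain ⟨ω₀⟩ := ‹Nonempty Ω›
      have h1 : μ ω₀ ≤ ∑ ω, μ ω :=
        Finset.single_le_sum (fun ω _ => hμ ω) (mem_univ ω₀)
      rw [hμsum] at h1
      have := hμlb ω₀
      linarith
    -- pointwise distance bound
    have hpt : ∀ ω, |μ' ω - μ ω| ≤ ε := fun ω =>
      le_trans (Finset.single_le_sum (f := fun ω => |μ' ω - μ ω|)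
        (fun i _ => abs_nonneg _) (mem_univ ω)) hdist
    have hμp : ∀ ω, p₀ ≤ μ ω := fun ω => by linarith [hμlb ω]
    have hμ'p : ∀ ω, p₀ ≤ μ' ω := by
      intro ω
      have h1 := abs_le.1 (hpt ω)
      have := hμlb ω
      linarith [h1.1]
    have hclose : ∀ ω, |μ ω - μ' ω| ≤ ε := by
      intro ω; rw [abs_sub_comm]; exact hpt ω
    have hclose' : ∀ ω, |μ' ω - μ ω| ≤ ε := hpt
    have hμ₀ : ∀ ω, 0 ≤ μ₀ ω := fun ω => (hμ₀pos ω).le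
    have h1 : Ustar u v μ₀ μ ≤ Ustar u v μ₀ μ' + 3 * ε / p₀ :=
      Ustar_le_transfer u v hu μ₀ hμ₀ hμ₀sum p₀ ε hp₀ hε0.le hεp μ μ' hμp hμ'p hclose
    have h2 : Ustar u v μ₀ μ' ≤ Ustar u v μ₀ μ + 3 * ε / p₀ :=
      Ustar_le_transfer u v hu μ₀ hμ₀ hμ₀sum p₀ ε hp₀ hε0.le hεp μ' μ hμ'p hμp hclose'
    have habs : |Ustar u v μ₀ μ' - Ustar u v μ₀ μ| ≤ 3 * ε / p₀ := by
      rw [abs_sub_le_iff]; constructor <;> linarith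
    have hfinal : 3 * ε / p₀ ≤ 4 * ε / (p₀ ^ 2 * D) := by
      rw [div_le_div_iff₀ hp₀ (by positivity)]
      nlinarith [mul_le_mul_of_nonneg_left hD1
          (mul_nonneg hε0.le (mul_nonneg hp₀.le hp₀.le)),
        mul_le_mul_of_nonneg_left hp₀half (mul_nonneg hε0.le hp₀.le),
        mul_nonneg hε0.le hp₀.le]
    linarith
end

section
/- Continuity of posteriors in the prior: let π : Ω → Δ(𝒮) be a signaling scheme, let μ, μ' ∈ Δ(Ω) with μ(ω) ≥ p₀ > 0 for every ω ∈ Ω, and let s ∈ 𝒮 be a signal with Σ_ω μ(ω)π(s|ω) > 0 and Σ_ω μ'(ω)π(s|ω) > 0. Let μ_s and μ'_s be the posterior beliefs induced by signal s under priors μ and μ' respectively. Then ‖μ_s − μ'_s‖₁ ≤ (2/p₀)·‖μ − μ'‖₁. -/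
open Finset

/-- Continuity of posteriors in the prior: if `μ(ω) ≥ p₀ > 0` for every
state, then for any prior `μ'` and any signal `s` with positive probability under both
priors, the posteriors satisfy `‖μ_s − μ'_s‖₁ ≤ (2/p₀)·‖μ − μ'‖₁`. -/
theorem posterior_continuity
    {Ω 𝒮 : Type*} [Fintype Ω] [Fintype 𝒮] [Nonempty Ω] [Nonempty 𝒮]
    (π : Ω → 𝒮 → ℝ) (hπ : ∀ ω s, 0 ≤ π ω s) (hπsum : ∀ ω, ∑ s, π ω s = 1)
    (p₀ : ℝ) (hp₀ : 0 < p₀)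
    (μ μ' : Ω → ℝ)
    (hμ : ∀ ω, 0 ≤ μ ω) (hμsum : ∑ ω, μ ω = 1) (hμlb : ∀ ω, p₀ ≤ μ ω)
    (hμ' : ∀ ω, 0 ≤ μ' ω) (hμ'sum : ∑ ω, μ' ω = 1)
    (s : 𝒮)
    (hpos : 0 < ∑ ω, μ ω * π ω s) (hpos' : 0 < ∑ ω, μ' ω * π ω s) :
    ∑ ω, |μ ω * π ω s / (∑ ω', μ ω' * π ω' s) -
          μ' ω * π ω s / (∑ ω', μ' ω' * π ω' s)| ≤
      (2 / p₀) * ∑ ω, |μ ω - μ' ω| := by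
  set A := ∑ ω', μ ω' * π ω' s with hAdef
  set B := ∑ ω', μ' ω' * π ω' s with hBdef
  set T := ∑ ω', π ω' s with hTdef
  set D := ∑ ω, |μ ω - μ' ω| * π ω s with hDdef
  set S := ∑ ω, |μ ω - μ' ω| with hSdef
  have hπle : ∀ ω, π ω s ≤ T :=
    fun ω => Finset.single_le_sum (fun i _ => hπ i s) (Finset.mem_univ ω)
  have hμle1 : ∀ ω, μ ω ≤ 1 :=
    fun ω => hμsum ▸ Finset.single_le_sum (fun i _ => hμ i) (Finset.mem_univ ω)
  have hAT : A ≤ T := Finset.sum_le_sum fun ω _ => by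
    nlinarith [hπ ω s, hμle1 ω, hμ ω]
  have hTpos : 0 < T := lt_of_lt_of_le hpos hAT
  have hpT : p₀ * T ≤ A := by
    rw [hTdef, Finset.mul_sum]
    exact Finset.sum_le_sum fun ω _ => mul_le_mul_of_nonneg_right (hμlb ω) (hπ ω s)
  have hABle : |A - B| ≤ D := by
    rw [hAdef, hBdef, ← Finset.sum_sub_distrib]
    refine (Finset.abs_sum_le_sum_abs _ _).trans (le_of_eq ?_)
    refine Finset.sum_congr rfl fun ω _ => ?_
    rw [← sub_mul, abs_mul, abs_of_nonneg (hπ ω s)]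
  have hDnn : 0 ≤ D := Finset.sum_nonneg fun ω _ =>
    mul_nonneg (abs_nonneg _) (hπ ω s)
  have key : ∀ ω, |μ ω * π ω s / A - μ' ω * π ω s / B| ≤
      |μ ω - μ' ω| * π ω s / A + μ' ω * π ω s * |A - B| / (A * B) := by
    intro ω
    have h1 : μ ω * π ω s / A - μ' ω * π ω s / B =
        (μ ω - μ' ω) * π ω s / A + μ' ω * π ω s * (B - A) / (A * B) := by
      field_simp
      ring
    rw [h1]
    refine (abs_add_le _ _).trans (le_of_eq ?_)
    have e1 : |(μ ω - μ' ω) * π ω s / A| = |μ ω - μ' ω| * π ω s / A := by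
      rw [abs_div, abs_mul, abs_of_nonneg (hπ ω s), abs_of_pos hpos]
    have e2 : |μ' ω * π ω s * (B - A) / (A * B)| =
        μ' ω * π ω s * |A - B| / (A * B) := by
      rw [abs_div, abs_mul, abs_mul, abs_of_nonneg (hμ' ω),
        abs_of_nonneg (hπ ω s), abs_of_pos (mul_pos hpos hpos'), abs_sub_comm]
    rw [e1, e2]
  calc ∑ ω, |μ ω * π ω s / A - μ' ω * π ω s / B|
      ≤ ∑ ω, (|μ ω - μ' ω| * π ω s / A + μ' ω * π ω s * |A - B| / (A * B)) :=
        Finset.sum_le_sum fun ω _ => key ω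
    _ = D / A + B * |A - B| / (A * B) := by
        rw [Finset.sum_add_distrib, ← Finset.sum_div, ← Finset.sum_div,
          ← Finset.sum_mul]
    _ = D / A + |A - B| / A := by
        have hA0 : A ≠ 0 := ne_of_gt hpos
        have hB0 : B ≠ 0 := ne_of_gt hpos'
        field_simp
    _ ≤ D / A + D / A := by gcongr
    _ = 2 * D / A := by ring
    _ ≤ 2 * D / (p₀ * T) := by
        apply div_le_div_of_nonneg_left (by linarith) (by positivity) hpT
    _ ≤ (2 / p₀) * S := by
        have hDle : D ≤ S * T := by
          rw [hSdef, Finset.sum_mul]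
          exact Finset.sum_le_sum fun ω _ =>
            mul_le_mul_of_nonneg_left (hπle ω) (abs_nonneg _)
        rw [div_le_iff₀ (by positivity)]
        have : (2 / p₀) * S * (p₀ * T) = 2 * (S * T) := by
          field_simp
        rw [this]
        linarith
end

section
/- Closeness of the modified signaling scheme: under the construction of π̃ from (μ, π*, {η_a}, δ, y, χ), with μ(ω) ≥ p₀ > 0 for every ω, for every action a ∈ 𝒜 with π*(a) > 0 and every state ω ∈ Ω one has |π̃(a|ω) − π*(a|ω)| ≤ δ/p₀ + y. -/
open Finset

/-- Closeness of the modified signaling scheme: under the construction of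
`π̃` from `(μ, π*, {η_a}, δ, y, χ)`, with `μ(ω) ≥ p₀ > 0` for every `ω`, for every action `a`
with `π*(a) > 0` and every state `ω`, one has `|π̃(a|ω) − π*(a|ω)| ≤ δ/p₀ + y`. -/
theorem modified_scheme_close
    {Ω 𝒜 : Type*} [Fintype Ω] [Fintype 𝒜] [Nonempty Ω] [Nonempty 𝒜]
    (v : 𝒜 → Ω → ℝ) (hv : ∀ a ω, v a ω ∈ Set.Icc (0:ℝ) 1)
    (p₀ : ℝ) (hp₀ : 0 < p₀)
    (μ : Ω → ℝ) (hμ : ∀ ω, 0 ≤ μ ω) (hμsum : ∑ ω, μ ω = 1) (hμlb : ∀ ω, p₀ ≤ μ ω)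
    -- recommendation scheme π*
    (πstar : Ω → 𝒜 → ℝ) (hπ : ∀ ω a, 0 ≤ πstar ω a) (hπsum : ∀ ω, ∑ a, πstar ω a = 1)
    -- beliefs η_a
    (η : 𝒜 → Ω → ℝ) (hη : ∀ a ω, 0 ≤ η a ω) (hηsum : ∀ a, ∑ ω, η a ω = 1)
    (δ y : ℝ) (hδ : δ ∈ Set.Icc (0:ℝ) 1) (hy : y ∈ Set.Icc (0:ℝ) 1)
    (χ : Ω → ℝ) (hχ : ∀ ω, 0 ≤ χ ω) (hχsum : ∑ ω, χ ω = 1)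
    -- marginal π*(a), posterior μ_a, mixture ξ_a
    (marg : 𝒜 → ℝ) (hmarg : ∀ a, marg a = ∑ ω, μ ω * πstar ω a)
    (post : 𝒜 → Ω → ℝ) (hpost : ∀ a ω, post a ω = μ ω * πstar ω a / marg a)
    (ξ : 𝒜 → Ω → ℝ) (hξ : ∀ a ω, ξ a ω = (1 - δ) * post a ω + δ * η a ω)
    -- decomposition μ = (1−y)·Σ_a π*(a)ξ_a + yχ
    (hdecomp : ∀ ω, μ ω = (1 - y) * (∑ a, marg a * ξ a ω) + y * χ ω)
    -- modified scheme on action signals: π̃(a|ω) = (1−y)π*(a)ξ_a(ω)/μ(ω)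
    (πt : Ω → 𝒜 → ℝ) (hπt : ∀ ω a, πt ω a = (1 - y) * marg a * ξ a ω / μ ω) :
    ∀ a, 0 < marg a → ∀ ω, |πt ω a - πstar ω a| ≤ δ / p₀ + y := by
  intro a ha ω
  obtain ⟨hδ0, hδ1⟩ := hδ
  obtain ⟨hy0, hy1⟩ := hy
  have hμω : 0 < μ ω := lt_of_lt_of_le hp₀ (hμlb ω)
  have hπ1 : πstar ω a ≤ 1 := by
    calc πstar ω a ≤ ∑ a', πstar ω a' :=
          Finset.single_le_sum (fun a' _ => hπ ω a') (Finset.mem_univ a)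
      _ = 1 := hπsum ω
  have hη1 : η a ω ≤ 1 := by
    calc η a ω ≤ ∑ w, η a w :=
          Finset.single_le_sum (fun w _ => hη a w) (Finset.mem_univ ω)
      _ = 1 := hηsum a
  have hμ1 : μ ω ≤ 1 := by
    calc μ ω ≤ ∑ w, μ w :=
          Finset.single_le_sum (fun w _ => hμ w) (Finset.mem_univ ω)
      _ = 1 := hμsum
  have hmarg1 : marg a ≤ 1 := by
    rw [hmarg]
    calc ∑ w, μ w * πstar w a ≤ ∑ w, μ w := by
          apply Finset.sum_le_sum
          intro i _
          nlinarith [hμ i, hπ i a,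
            Finset.single_le_sum (fun a' (_ : a' ∈ Finset.univ) => hπ i a') (Finset.mem_univ a),
            hπsum i]
      _ = 1 := hμsum
  have hp1 : p₀ ≤ 1 := le_trans (hμlb ω) hμ1
  have hπteq : πt ω a = (1 - y) * ((1 - δ) * πstar ω a + δ * (marg a * η a ω / μ ω)) := by
    rw [hπt, hξ, hpost]
    field_simp
  set t : ℝ := marg a * η a ω / μ ω with ht
  have ht0 : 0 ≤ t := div_nonneg (mul_nonneg ha.le (hη a ω)) hμω.le
  clear_value t
  have ht1 : t ≤ 1 / p₀ := by
    rw [ht, div_le_div_iff₀ hμω hp₀]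
    have hme : marg a * η a ω ≤ 1 := mul_le_one₀ hmarg1 (hη a ω) hη1
    nlinarith [hμlb ω, hp₀.le]
  have hdp : δ ≤ δ / p₀ := by
    rw [le_div_iff₀ hp₀]
    nlinarith
  rw [hπteq, abs_le]
  constructor
  · nlinarith [hπ ω a, mul_nonneg (mul_nonneg (sub_nonneg.2 hy1) hδ0) ht0,
      mul_nonneg hy0 hδ0, mul_nonneg (mul_nonneg hy0 hδ0) (hπ ω a)]
  · have hδt : δ * t ≤ δ / p₀ := by
      calc δ * t ≤ δ * (1 / p₀) := mul_le_mul_of_nonneg_left ht1 hδ0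
        _ = δ / p₀ := by ring
    have hX : 0 ≤ (1 - δ) * πstar ω a + δ * t :=
      add_nonneg (mul_nonneg (by linarith) (hπ ω a)) (mul_nonneg hδ0 ht0)
    nlinarith [mul_nonneg hy0 hX, mul_nonneg hδ0 (hπ ω a)]
end

section
/- Robust persuasiveness of the modified signaling scheme: suppose v has inducibility margin D > 0 witnessed by beliefs η_a, that μ(ω) ≥ 2p₀ > 0 for all ω, that π* is obedient for μ (so each action a with π*(a) > 0 is receiver-optimal at its posterior μ_a), and that δ ≥ 2ε/(p₀D) where 0 < ε < p₀. Then for every prior μ' ∈ Δ(Ω) with ‖μ' − μ‖₁ ≤ ε and every a ∈ 𝒜 with π*(a) > 0, the posterior μ'_a induced by signal a under the modified scheme π̃ and prior μ' satisfies Σ_ω μ'_a(ω)(v(a,ω) − v(a',ω)) ≥ 0 for every a' ∈ 𝒜; i.e. every action recommendation of π̃ is persuasive for every prior in the ε-ball around μ. -/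
open Finset

/-- Robust persuasiveness of the modified signaling scheme: if `v` has
inducibility margin `D > 0` witnessed by the beliefs `η_a`, `μ(ω) ≥ 2p₀ > 0` for all `ω`,
`π*` is obedient for `μ`, and `δ ≥ 2ε/(p₀D)` with `0 < ε < p₀`, then for every prior `μ'`
with `‖μ' − μ‖₁ ≤ ε` and every action `a` with `π*(a) > 0`, the posterior induced by signal
`a` under the modified scheme `π̃` and prior `μ'` makes `a` a best response, i.e. every
action recommendation of `π̃` is persuasive for every prior in the `ε`-ball around `μ`. -/
theorem modified_scheme_robustly_persuasive
    {Ω 𝒜 : Type*} [Fintype Ω] [Fintype 𝒜] [Nonempty Ω] [Nonempty 𝒜]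
    (v : 𝒜 → Ω → ℝ) (hv : ∀ a ω, v a ω ∈ Set.Icc (0:ℝ) 1)
    -- inducibility margin D witnessed by the η_a
    (D : ℝ) (hD : 0 < D)
    (η : 𝒜 → Ω → ℝ) (hη : ∀ a ω, 0 ≤ η a ω) (hηsum : ∀ a, ∑ ω, η a ω = 1)
    (hmargin : ∀ a a', a' ≠ a → D ≤ ∑ ω, η a ω * (v a ω - v a' ω))
    -- full-support prior μ with μ(ω) ≥ 2p₀
    (p₀ : ℝ) (hp₀ : 0 < p₀)
    (μ : Ω → ℝ) (hμ : ∀ ω, 0 ≤ μ ω) (hμsum : ∑ ω, μ ω = 1) (hμlb : ∀ ω, 2 * p₀ ≤ μ ω)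
    -- obedient recommendation scheme π*
    (πstar : Ω → 𝒜 → ℝ) (hπ : ∀ ω a, 0 ≤ πstar ω a) (hπsum : ∀ ω, ∑ a, πstar ω a = 1)
    (hobed : ∀ a a', 0 ≤ ∑ ω, μ ω * πstar ω a * (v a ω - v a' ω))
    -- parameters of the modified scheme
    (ε : ℝ) (hε0 : 0 < ε) (hεp₀ : ε < p₀)
    (δ y : ℝ) (hδ : δ ∈ Set.Icc (0:ℝ) 1) (hδlb : 2 * ε / (p₀ * D) ≤ δ)
    (hy : y ∈ Set.Icc (0:ℝ) 1)
    (χ : Ω → ℝ) (hχ : ∀ ω, 0 ≤ χ ω) (hχsum : ∑ ω, χ ω = 1)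
    (marg : 𝒜 → ℝ) (hmarg : ∀ a, marg a = ∑ ω, μ ω * πstar ω a)
    (post : 𝒜 → Ω → ℝ) (hpost : ∀ a ω, post a ω = μ ω * πstar ω a / marg a)
    (ξ : 𝒜 → Ω → ℝ) (hξ : ∀ a ω, ξ a ω = (1 - δ) * post a ω + δ * η a ω)
    (hdecomp : ∀ ω, μ ω = (1 - y) * (∑ a, marg a * ξ a ω) + y * χ ω)
    (πt : Ω → 𝒜 → ℝ) (hπt : ∀ ω a, πt ω a = (1 - y) * marg a * ξ a ω / μ ω) :
    ∀ μ' : Ω → ℝ, (∀ ω, 0 ≤ μ' ω) → (∑ ω, μ' ω = 1) →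
      (∑ ω, |μ' ω - μ ω|) ≤ ε →
      ∀ a, 0 < marg a → ∀ a' : 𝒜,
        0 ≤ ∑ ω, (μ' ω * πt ω a / (∑ ω', μ' ω' * πt ω' a)) * (v a ω - v a' ω) := by

  intro μ' hμ'0 hμ'sum hclose a ha a'
  have h1y : 0 ≤ 1 - y := by linarith [hy.2]
  have hμpos : ∀ ω, 0 < μ ω := fun ω => lt_of_lt_of_le (by linarith) (hμlb ω)
  have hξ0 : ∀ ω, 0 ≤ ξ a ω := by
    intro ω; rw [hξ]
    have hpost0 : 0 ≤ post a ω := by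
      rw [hpost]; exact div_nonneg (mul_nonneg (hμ ω) (hπ ω a)) ha.le
    have h1 := hδ.1; have h2 := hδ.2
    nlinarith [hη a ω]
  have hpostsum : ∑ ω, post a ω = 1 := by
    have : ∑ ω, post a ω = (∑ ω, μ ω * πstar ω a) / marg a := by
      rw [Finset.sum_div]; exact Finset.sum_congr rfl fun ω _ => hpost a ω
    rw [this, ← hmarg a, div_self ha.ne']
  have hξsum : ∑ ω, ξ a ω = 1 := by
    have : ∑ ω, ξ a ω = (1-δ) * ∑ ω, post a ω + δ * ∑ ω, η a ω := by
      simp_rw [hξ, Finset.sum_add_distrib, Finset.mul_sum]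
    rw [this, hpostsum, hηsum]; ring
  have hξle : ∀ ω, ξ a ω ≤ 1 := by
    intro ω
    calc ξ a ω ≤ ∑ ω', ξ a ω' := Finset.single_le_sum (fun i _ => hξ0 i) (mem_univ ω)
      _ = 1 := hξsum
  have hπt0 : ∀ ω, 0 ≤ πt ω a := by
    intro ω; rw [hπt]
    exact div_nonneg (mul_nonneg (mul_nonneg h1y ha.le) (hξ0 ω)) (hμpos ω).le
  set B : ℝ := (1-y) * marg a / (2*p₀) with hB
  have hB0 : 0 ≤ B := div_nonneg (mul_nonneg h1y ha.le) (by linarith)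
  have hπtle : ∀ ω, πt ω a ≤ B := by
    intro ω; rw [hπt, hB]
    apply div_le_div₀ (mul_nonneg h1y ha.le) _ (by linarith) (hμlb ω)
    have := hξle ω
    nlinarith [mul_nonneg h1y ha.le]
  set Z : ℝ := ∑ ω', μ' ω' * πt ω' a with hZ
  have hZ0 : 0 ≤ Z := Finset.sum_nonneg fun ω _ => mul_nonneg (hμ'0 ω) (hπt0 ω)
  rcases eq_or_lt_of_le hZ0 with hZzero | hZpos
  · simp only [← hZ, ← hZzero, div_zero, zero_mul]
    simp
  · -- rewrite goal as S' / Z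
    have hrw : (∑ ω, (μ' ω * πt ω a / Z) * (v a ω - v a' ω))
        = (∑ ω, μ' ω * πt ω a * (v a ω - v a' ω)) / Z := by
      rw [Finset.sum_div]; exact Finset.sum_congr rfl fun ω _ => by ring
    rw [hrw]
    apply div_nonneg _ hZpos.le
    rcases eq_or_ne a' a with rfl | hne
    · simp
    · -- split S' = main + error
      have hsplit : (∑ ω, μ' ω * πt ω a * (v a ω - v a' ω))
          = (∑ ω, μ ω * πt ω a * (v a ω - v a' ω))
            + ∑ ω, (μ' ω - μ ω) * πt ω a * (v a ω - v a' ω) := by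
        rw [← Finset.sum_add_distrib]; exact Finset.sum_congr rfl fun ω _ => by ring
      rw [hsplit]
      -- main term
      have hkey : ∀ ω, μ ω * πt ω a = (1-y) * marg a * ξ a ω := by
        intro ω; rw [hπt]
        field_simp [(hμpos ω).ne']
      have hmain : (∑ ω, μ ω * πt ω a * (v a ω - v a' ω))
          = (1-y) * marg a * ((1-δ) * (∑ ω, post a ω * (v a ω - v a' ω))
              + δ * (∑ ω, η a ω * (v a ω - v a' ω))) := by
        simp_rw [hkey]
        rw [Finset.mul_sum, Finset.mul_sum, ← Finset.sum_add_distrib, Finset.mul_sum]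
        refine Finset.sum_congr rfl fun ω _ => by rw [hξ]; ring
      have hT1 : 0 ≤ ∑ ω, post a ω * (v a ω - v a' ω) := by
        have : (∑ ω, post a ω * (v a ω - v a' ω))
            = (∑ ω, μ ω * πstar ω a * (v a ω - v a' ω)) / marg a := by
          rw [Finset.sum_div]
          exact Finset.sum_congr rfl fun ω _ => by rw [hpost]; ring
        rw [this]; exact div_nonneg (hobed a a') ha.le
      have hT2 : D ≤ ∑ ω, η a ω * (v a ω - v a' ω) := hmargin a a' hne
      -- error term
      have herr : -(ε * B) ≤ ∑ ω, (μ' ω - μ ω) * πt ω a * (v a ω - v a' ω) := by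
        have hterm : ∀ ω ∈ Finset.univ,
            -( |μ' ω - μ ω| * B) ≤ (μ' ω - μ ω) * πt ω a * (v a ω - v a' ω) := by
          intro ω _
          have hd : |v a ω - v a' ω| ≤ 1 := by
            rw [abs_le]
            constructor
            · linarith [(hv a ω).1, (hv a' ω).2]
            · linarith [(hv a ω).2, (hv a' ω).1]
          have habs : |(μ' ω - μ ω) * πt ω a * (v a ω - v a' ω)| ≤ |μ' ω - μ ω| * B := by
            rw [abs_mul, abs_mul, abs_of_nonneg (hπt0 ω)]
            have e1 : 0 ≤ |μ' ω - μ ω| * (B - πt ω a) :=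
              mul_nonneg (abs_nonneg _) (sub_nonneg.mpr (hπtle ω))
            have e2 : 0 ≤ |μ' ω - μ ω| * πt ω a * (1 - |v a ω - v a' ω|) :=
              mul_nonneg (mul_nonneg (abs_nonneg _) (hπt0 ω)) (sub_nonneg.mpr hd)
            nlinarith [e1, e2]
          linarith [neg_abs_le ((μ' ω - μ ω) * πt ω a * (v a ω - v a' ω))]
        calc -(ε * B) ≤ -((∑ ω, |μ' ω - μ ω|) * B) := by
              have := mul_le_mul_of_nonneg_right hclose hB0
              linarith
          _ = ∑ ω, -( |μ' ω - μ ω| * B) := by rw [Finset.sum_mul, ← Finset.sum_neg_distrib]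
          _ ≤ _ := Finset.sum_le_sum hterm
      rw [hmain]
      -- numeric conclusion
      have hδD : 2 * ε / p₀ ≤ δ * D := by
        have h1 : 2 * ε / (p₀ * D) * D ≤ δ * D := mul_le_mul_of_nonneg_right hδlb hD.le
        have h2 : 2 * ε / (p₀ * D) * D = 2 * ε / p₀ := by field_simp
        linarith
      have hεB : ε * B = (1-y) * marg a * (ε / (2*p₀)) := by rw [hB]; ring
      have hinner : ε / (2*p₀) ≤ (1-δ) * (∑ ω, post a ω * (v a ω - v a' ω))
          + δ * (∑ ω, η a ω * (v a ω - v a' ω)) := by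
        have hδ0 := hδ.1
        have hδ1 := hδ.2
        have h3 : δ * D ≤ δ * (∑ ω, η a ω * (v a ω - v a' ω)) :=
          mul_le_mul_of_nonneg_left hT2 hδ0
        have h4 : ε / (2*p₀) ≤ 2 * ε / p₀ := by
          rw [div_le_div_iff₀ (by linarith) hp₀]; nlinarith
        have h5 : 0 ≤ (1-δ) * (∑ ω, post a ω * (v a ω - v a' ω)) :=
          mul_nonneg (by linarith) hT1
        linarith only [h3, h4, h5, hδD]
      have hfin := mul_le_mul_of_nonneg_left hinner (mul_nonneg h1y ha.le)
      have hεB0 : 0 ≤ ε * B := mul_nonneg hε0.le hB0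
      linarith only [hfin, hεB, hεB0, herr]
end

section
/- Near-optimality of the modified signaling scheme on action recommendations: under the construction of π̃ from (μ, π*, {η_a}, δ, y, χ), with μ(ω) ≥ p₀ > 0 for every ω, y ≤ δ/p₀, and sender utility u : 𝒜 × Ω → [0,1], the expected sender utility from action-recommendation signals satisfies U_𝒜(π̃) ≥ U_𝒜(π*) − 2δ/p₀, where U_𝒜(π) = Σ_ω μ₀(ω) Σ_{a∈𝒜} π(a|ω)u(a,ω). -/
open Finset

/-- Near-optimality of the modified signaling scheme on action
recommendations: under the construction of `π̃` from `(μ, π*, {η_a}, δ, y, χ)`, with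
`μ(ω) ≥ p₀ > 0` and `y ≤ δ/p₀`, the sender utility from action-recommendation signals
satisfies `U_𝒜(π̃) ≥ U_𝒜(π*) − 2δ/p₀`. -/
theorem modified_scheme_near_optimal
    {Ω 𝒜 : Type*} [Fintype Ω] [Fintype 𝒜] [Nonempty Ω] [Nonempty 𝒜]
    (u v : 𝒜 → Ω → ℝ)
    (hu : ∀ a ω, u a ω ∈ Set.Icc (0:ℝ) 1)
    (hv : ∀ a ω, v a ω ∈ Set.Icc (0:ℝ) 1)
    -- sender prior
    (μ₀ : Ω → ℝ) (hμ₀pos : ∀ ω, 0 < μ₀ ω) (hμ₀sum : ∑ ω, μ₀ ω = 1)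
    -- full-support receiver prior
    (p₀ : ℝ) (hp₀ : 0 < p₀)
    (μ : Ω → ℝ) (hμ : ∀ ω, 0 ≤ μ ω) (hμsum : ∑ ω, μ ω = 1) (hμlb : ∀ ω, p₀ ≤ μ ω)
    -- recommendation scheme π*
    (πstar : Ω → 𝒜 → ℝ) (hπ : ∀ ω a, 0 ≤ πstar ω a) (hπsum : ∀ ω, ∑ a, πstar ω a = 1)
    -- beliefs η_a and parameters
    (η : 𝒜 → Ω → ℝ) (hη : ∀ a ω, 0 ≤ η a ω) (hηsum : ∀ a, ∑ ω, η a ω = 1)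
    (δ y : ℝ) (hδ : δ ∈ Set.Icc (0:ℝ) 1) (hy : y ∈ Set.Icc (0:ℝ) 1)
    (hyδ : y ≤ δ / p₀)
    (χ : Ω → ℝ) (hχ : ∀ ω, 0 ≤ χ ω) (hχsum : ∑ ω, χ ω = 1)
    (marg : 𝒜 → ℝ) (hmarg : ∀ a, marg a = ∑ ω, μ ω * πstar ω a)
    (post : 𝒜 → Ω → ℝ) (hpost : ∀ a ω, post a ω = μ ω * πstar ω a / marg a)
    (ξ : 𝒜 → Ω → ℝ) (hξ : ∀ a ω, ξ a ω = (1 - δ) * post a ω + δ * η a ω)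
    (hdecomp : ∀ ω, μ ω = (1 - y) * (∑ a, marg a * ξ a ω) + y * χ ω)
    (πt : Ω → 𝒜 → ℝ) (hπt : ∀ ω a, πt ω a = (1 - y) * marg a * ξ a ω / μ ω) :
    (∑ ω, μ₀ ω * ∑ a, πstar ω a * u a ω) - 2 * δ / p₀ ≤
      ∑ ω, μ₀ ω * ∑ a, πt ω a * u a ω := by

  have hμpos : ∀ ω, 0 < μ ω := fun ω => lt_of_lt_of_le hp₀ (hμlb ω)
  -- marg a * post a ω = μ ω * πstar ω a
  have hmp : ∀ a ω, marg a * post a ω = μ ω * πstar ω a := by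
    intro a ω
    rcases eq_or_lt_of_le (show (0:ℝ) ≤ marg a by
      rw [hmarg]; exact Finset.sum_nonneg fun ω' _ => mul_nonneg (hμ ω') (hπ ω' a)) with h0 | hpos
    · have hz : πstar ω a = 0 := by
        have := (Finset.sum_eq_zero_iff_of_nonneg
          (fun ω' _ => mul_nonneg (hμ ω') (hπ ω' a))).mp (by rw [← hmarg]; exact h0.symm)
        have := this ω (Finset.mem_univ ω)
        have := hμpos ω
        nlinarith
      rw [← h0, hz]; ring
    · rw [hpost]; field_simp
  have hπtge : ∀ ω a, (1 - y) * (1 - δ) * πstar ω a ≤ πt ω a := by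
    intro ω a
    rw [hπt]
    have hmξ : marg a * ξ a ω = (1 - δ) * (μ ω * πstar ω a) + δ * (marg a * η a ω) := by
      rw [hξ]; linear_combination (1 - δ) * hmp a ω
    rw [div_eq_mul_inv]
    have hmarg0 : 0 ≤ marg a := by
      rw [hmarg]; exact Finset.sum_nonneg fun ω' _ => mul_nonneg (hμ ω') (hπ ω' a)
    have h1y : 0 ≤ 1 - y := by linarith [hy.2]
    have h1δ : 0 ≤ 1 - δ := by linarith [hδ.2]
    have hinv : 0 < (μ ω)⁻¹ := inv_pos.mpr (hμpos ω)
    have key : (1 - y) * (1 - δ) * πstar ω a * μ ω ≤ (1 - y) * (marg a * ξ a ω) := by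
      rw [hmξ]
      have : 0 ≤ δ * (marg a * η a ω) := mul_nonneg hδ.1 (mul_nonneg hmarg0 (hη a ω))
      nlinarith
    calc (1 - y) * (1 - δ) * πstar ω a
        = ((1 - y) * (1 - δ) * πstar ω a * μ ω) * (μ ω)⁻¹ := by
          rw [mul_inv_cancel_right₀ (hμpos ω).ne']
      _ ≤ ((1 - y) * (marg a * ξ a ω)) * (μ ω)⁻¹ :=
          mul_le_mul_of_nonneg_right key hinv.le
      _ = (1 - y) * marg a * ξ a ω * (μ ω)⁻¹ := by ring
  set U := ∑ ω, μ₀ ω * ∑ a, πstar ω a * u a ω with hU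
  have hU1 : U ≤ 1 := by
    rw [hU, ← hμ₀sum]
    refine Finset.sum_le_sum fun ω _ => ?_
    have : ∑ a, πstar ω a * u a ω ≤ 1 := by
      calc ∑ a, πstar ω a * u a ω ≤ ∑ a, πstar ω a :=
            Finset.sum_le_sum fun a _ => by nlinarith [(hu a ω).2, (hu a ω).1, hπ ω a]
        _ = 1 := hπsum ω
    nlinarith [hμ₀pos ω]
  have hU0 : 0 ≤ U := by
    refine Finset.sum_nonneg fun ω _ => mul_nonneg (hμ₀pos ω).le ?_
    exact Finset.sum_nonneg fun a _ => mul_nonneg (hπ ω a) (hu a ω).1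
  have hge : (1 - y) * (1 - δ) * U ≤ ∑ ω, μ₀ ω * ∑ a, πt ω a * u a ω := by
    rw [hU, Finset.mul_sum]
    refine Finset.sum_le_sum fun ω _ => ?_
    have hrw : μ₀ ω * ∑ a, ((1 - y) * (1 - δ) * πstar ω a) * u a ω
        = (1 - y) * (1 - δ) * (μ₀ ω * ∑ a, πstar ω a * u a ω) := by
      rw [Finset.mul_sum, Finset.mul_sum, Finset.mul_sum]
      exact Finset.sum_congr rfl fun a _ => by ring
    rw [← hrw]
    refine mul_le_mul_of_nonneg_left
      (Finset.sum_le_sum fun a _ =>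
        mul_le_mul_of_nonneg_right (hπtge ω a) (hu a ω).1) (hμ₀pos ω).le
  have hp1 : p₀ ≤ 1 := by
    obtain ⟨ω⟩ := ‹Nonempty Ω›
    have : μ ω ≤ 1 := by
      rw [← hμsum]
      exact Finset.single_le_sum (fun ω' _ => hμ ω') (Finset.mem_univ ω)
    linarith [hμlb ω]
  have hδp : δ ≤ δ / p₀ := by
    rw [le_div_iff₀ hp₀]; nlinarith [hδ.1]
  have hsum : y + δ ≤ 2 * δ / p₀ := by
    have : 2 * δ / p₀ = δ / p₀ + δ / p₀ := by ring
    linarith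
  nlinarith [hy.1, hδ.1, mul_nonneg hy.1 hδ.1]
end

section
/- Existence of a near-obedient n-uniform prior (core lemma of the QPTAS): let μ* ∈ Δ(Ω) and let π* : Ω → Δ(𝒜) be obedient for μ*, i.e. Σ_ω μ*(ω)π*(a|ω)(v(a,ω) − v(a',ω)) ≥ 0 for all a, a' ∈ 𝒜, where v takes values in [0,1]. Then for every ε > 0 and every positive integer n with |𝒜|²·exp(−nε²/2) < 1 (e.g. n > 4·ln|𝒜|/ε²), there exists μ̂ ∈ Δ(Ω) with n·μ̂(ω) a nonnegative integer for every ω ∈ Ω such that Σ_ω μ̂(ω)π*(a|ω)(v(a,ω) − v(a',ω)) ≥ −ε for all a, a' ∈ 𝒜. -/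
open Finset

lemma hoeff_core (p : ℝ) (hp0 : 0 ≤ p) (hp1 : p ≤ 1) (u : ℝ) :
    1 - p + p * Real.exp u ≤ Real.exp (p * u + u ^ 2 / 8) := by
  have hD : ∀ x : ℝ, 0 < 1 - p + p * Real.exp x := by
    intro x
    rcases lt_or_eq_of_le hp1 with h | h
    · have : 0 ≤ p * Real.exp x := mul_nonneg hp0 (Real.exp_pos x).le
      linarith
    · subst h; simpa using (Real.exp_pos x)
  set F : ℝ → ℝ := fun x => p * x + x ^ 2 / 8 - Real.log (1 - p + p * Real.exp x) with hF
  set F' : ℝ → ℝ := fun x => p + x / 4 - p * Real.exp x / (1 - p + p * Real.exp x) with hF'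
  have hDd : ∀ x : ℝ, HasDerivAt (fun y => 1 - p + p * Real.exp y) (p * Real.exp x) x := by
    intro x
    simpa using ((Real.hasDerivAt_exp x).const_mul p).const_add (1 - p)
  have hFd : ∀ x, HasDerivAt F (F' x) x := by
    intro x
    have h1 : HasDerivAt (fun y : ℝ => p * y + y ^ 2 / 8) (p + 2 * x / 8) x := by
      have := ((hasDerivAt_id x).const_mul p).add
        (((hasDerivAt_pow 2 x)).div_const 8)
      exact this.congr_deriv (by norm_num)
    have h2 : HasDerivAt (fun y => Real.log (1 - p + p * Real.exp y))
        (p * Real.exp x / (1 - p + p * Real.exp x)) x := (hDd x).log (hD x).ne'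
    have := h1.sub h2
    refine this.congr_deriv ?_
    simp only [hF']
    ring
  have hF'd : ∀ x, HasDerivAt F'
      (1/4 - (p * Real.exp x / (1 - p + p * Real.exp x)
        - (p * Real.exp x / (1 - p + p * Real.exp x)) ^ 2)) x := by
    intro x
    have hq : HasDerivAt (fun y => p * Real.exp y / (1 - p + p * Real.exp y))
        ((p * Real.exp x * (1 - p + p * Real.exp x) - p * Real.exp x * (p * Real.exp x)) /
          (1 - p + p * Real.exp x) ^ 2) x :=
      ((Real.hasDerivAt_exp x).const_mul p).div (hDd x) (hD x).ne'
    have h1 : HasDerivAt (fun y : ℝ => p + y / 4) (1/4 : ℝ) x := by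
      simpa using (hasDerivAt_id x).div_const 4 |>.const_add p
    have := h1.sub hq
    refine this.congr_deriv ?_
    have hne := (hD x).ne'
    field_simp
  have hF'nonneg : ∀ x, 0 ≤ 1/4 - (p * Real.exp x / (1 - p + p * Real.exp x)
        - (p * Real.exp x / (1 - p + p * Real.exp x)) ^ 2) := by
    intro x
    set q := p * Real.exp x / (1 - p + p * Real.exp x)
    nlinarith [sq_nonneg (q - 1/2)]
  have hmono : Monotone F' :=
    monotone_of_deriv_nonneg (fun x => (hF'd x).differentiableAt)
      (fun x => by rw [(hF'd x).deriv]; exact hF'nonneg x)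
  have hF'0 : F' 0 = 0 := by
    simp only [hF']
    rw [Real.exp_zero]
    field_simp
    ring
  have hF0 : F 0 = 0 := by simp [hF]
  have key : ∀ x, 0 ≤ F x := by
    intro x
    rcases le_total 0 x with h | h
    · have : MonotoneOn F (Set.Ici 0) := by
        refine monotoneOn_of_deriv_nonneg (convex_Ici 0)
          (Continuous.continuousOn ?_) (fun y hy => (hFd y).differentiableAt.differentiableWithinAt) ?_
        · exact ((continuous_const.mul continuous_id).add
            ((continuous_pow 2).div_const 8)).sub
            ((continuous_const.add (continuous_const.mul Real.continuous_exp)).log (fun y => (hD y).ne'))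
        · intro y hy
          rw [(hFd y).deriv]
          have : F' 0 ≤ F' y := hmono (le_of_lt (by simpa using hy))
          linarith [hF'0]
      have := this (Set.mem_Ici.mpr le_rfl) (Set.mem_Ici.mpr h) h
      linarith [hF0]
    · have : AntitoneOn F (Set.Iic 0) := by
        refine antitoneOn_of_deriv_nonpos (convex_Iic 0)
          (Continuous.continuousOn ?_) (fun y hy => (hFd y).differentiableAt.differentiableWithinAt) ?_
        · exact ((continuous_const.mul continuous_id).add
            ((continuous_pow 2).div_const 8)).sub
            ((continuous_const.add (continuous_const.mul Real.continuous_exp)).log (fun y => (hD y).ne'))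
        · intro y hy
          rw [(hFd y).deriv]
          have : F' y ≤ F' 0 := hmono (le_of_lt (by simpa using hy))
          linarith [hF'0]
      have := this (Set.mem_Iic.mpr h) (Set.mem_Iic.mpr le_rfl) h
      linarith [hF0]
  have hx := key u
  have hlog : Real.log (1 - p + p * Real.exp u) ≤ p * u + u ^ 2 / 8 := by
    simp only [hF] at hx; linarith
  calc 1 - p + p * Real.exp u = Real.exp (Real.log (1 - p + p * Real.exp u)) :=
        (Real.exp_log (hD u)).symm
    _ ≤ Real.exp (p * u + u ^ 2 / 8) := Real.exp_le_exp.mpr hlog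




lemma hoeff_two_point (m t : ℝ) (hm1 : -1 ≤ m) (hm2 : m ≤ 1) :
    (1 - m)/2 * Real.exp t + (1 + m)/2 * Real.exp (-t) ≤ Real.exp (t^2/2 - t*m) := by
  have h := hoeff_core ((1+m)/2) (by linarith) (by linarith) (-2*t)
  have het : (0:ℝ) < Real.exp t := Real.exp_pos t
  have hmul := mul_le_mul_of_nonneg_left h het.le
  have h1 : Real.exp (-2*t) = Real.exp (-t) * Real.exp (-t) := by
    rw [← Real.exp_add]; ring_nf
  have h2 : Real.exp t * Real.exp (-t) = 1 := by rw [← Real.exp_add]; simp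
  have hE : Real.exp t * (1 - (1+m)/2 + (1+m)/2 * Real.exp (-2*t)) =
      (1 - m)/2 * Real.exp t + (1 + m)/2 * Real.exp (-t) := by
    rw [h1]
    linear_combination ((1+m)/2 * Real.exp (-t)) * h2
  have hR : Real.exp t * Real.exp ((1+m)/2 * (-2*t) + (-2*t)^2/8) =
      Real.exp (t^2/2 - t*m) := by
    rw [← Real.exp_add]; congr 1; ring
  linarith [hmul, hE.symm.le, hR.le]

lemma mgf_bound {Ω : Type*} [Fintype Ω] (μ : Ω → ℝ) (hμ : ∀ ω, 0 ≤ μ ω)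
    (hs : ∑ ω, μ ω = 1) (f : Ω → ℝ) (hf : ∀ ω, -1 ≤ f ω ∧ f ω ≤ 1) (t : ℝ) :
    ∑ ω, μ ω * Real.exp (-(t * f ω)) ≤ Real.exp (t^2/2 - t * (∑ ω, μ ω * f ω)) := by
  set m := ∑ ω, μ ω * f ω with hm
  have hm1 : -1 ≤ m := by
    have : ∑ ω, μ ω * (-1 : ℝ) ≤ m := by
      apply Finset.sum_le_sum
      intro ω _
      exact mul_le_mul_of_nonneg_left (hf ω).1 (hμ ω)
    simpa [← Finset.sum_mul, hs] using this
  have hm2 : m ≤ 1 := by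
    have : m ≤ ∑ ω, μ ω * (1 : ℝ) := by
      apply Finset.sum_le_sum
      intro ω _
      exact mul_le_mul_of_nonneg_left (hf ω).2 (hμ ω)
    simpa [hs] using this
  have hpt : ∀ ω, Real.exp (-(t * f ω)) ≤
      (1 - f ω)/2 * Real.exp t + (1 + f ω)/2 * Real.exp (-t) := by
    intro ω
    have ha : (0:ℝ) ≤ (1 - f ω)/2 := by linarith [(hf ω).2]
    have hb : (0:ℝ) ≤ (1 + f ω)/2 := by linarith [(hf ω).1]
    have hab : (1 - f ω)/2 + (1 + f ω)/2 = 1 := by ring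
    have hcvx := convexOn_exp.2 (Set.mem_univ t) (Set.mem_univ (-t)) ha hb hab
    have he : (1 - f ω)/2 * t + (1 + f ω)/2 * (-t) = -(t * f ω) := by ring
    rw [smul_eq_mul, smul_eq_mul, smul_eq_mul, smul_eq_mul, he] at hcvx
    exact hcvx
  calc ∑ ω, μ ω * Real.exp (-(t * f ω))
      ≤ ∑ ω, μ ω * ((1 - f ω)/2 * Real.exp t + (1 + f ω)/2 * Real.exp (-t)) := by
        apply Finset.sum_le_sum
        intro ω _
        exact mul_le_mul_of_nonneg_left (hpt ω) (hμ ω)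
    _ = (∑ ω, μ ω) * (Real.exp t/2 + Real.exp (-t)/2)
        + m * (Real.exp (-t)/2 - Real.exp t/2) := by
        rw [Finset.sum_mul, hm, Finset.sum_mul, ← Finset.sum_add_distrib]
        apply Finset.sum_congr rfl
        intro ω _
        ring
    _ = (1 - m)/2 * Real.exp t + (1 + m)/2 * Real.exp (-t) := by rw [hs]; ring
    _ ≤ Real.exp (t^2/2 - t*m) := hoeff_two_point m t hm1 hm2

lemma iid_mgf {Ω : Type*} [Fintype Ω] (μ : Ω → ℝ) (f : Ω → ℝ) (t : ℝ) (n : ℕ) :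
    ∑ s : Fin n → Ω, (∏ i, μ (s i)) * Real.exp (-(t * ∑ i, f (s i)))
      = (∑ ω, μ ω * Real.exp (-(t * f ω))) ^ n := by
  classical
  have hpow : (∑ ω, μ ω * Real.exp (-(t * f ω))) ^ n
      = ∏ _i : Fin n, (∑ ω, μ ω * Real.exp (-(t * f ω))) := by
    rw [Finset.prod_const, Finset.card_univ, Fintype.card_fin]
  rw [hpow, Finset.prod_univ_sum, Fintype.piFinset_univ]
  apply Finset.sum_congr rfl
  intro s _
  rw [Finset.prod_mul_distrib, ← Real.exp_sum]
  congr 1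
  rw [Finset.mul_sum, ← Finset.sum_neg_distrib]

-- Chernoff bound for one constraint
lemma chernoff' {Ω : Type*} [Fintype Ω] [DecidableEq Ω] (μ : Ω → ℝ) (hμ : ∀ ω, 0 ≤ μ ω)
    (hs : ∑ ω, μ ω = 1) (f : Ω → ℝ) (hf : ∀ ω, -1 ≤ f ω ∧ f ω ≤ 1)
    (hmean : 0 ≤ ∑ ω, μ ω * f ω) (ε : ℝ) (hε : 0 < ε) (n : ℕ) :
    ∑ s ∈ Finset.univ.filter (fun s : Fin n → Ω => ∑ i, f (s i) < -((n:ℝ) * ε)),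
      (∏ i, μ (s i))
      ≤ Real.exp (-(n:ℝ) * ε^2 / 2) := by
  have hP : ∀ s : Fin n → Ω, 0 ≤ ∏ i, μ (s i) :=
    fun s => Finset.prod_nonneg fun i _ => hμ (s i)
  have hstep : ∀ s ∈ Finset.univ.filter (fun s : Fin n → Ω => ∑ i, f (s i) < -((n:ℝ) * ε)),
      (∏ i, μ (s i)) ≤ Real.exp (-(n:ℝ)*ε^2) * ((∏ i, μ (s i)) * Real.exp (-(ε * ∑ i, f (s i)))) := by
    intro s hsmem
    rw [Finset.mem_filter] at hsmem
    have hlt := hsmem.2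
    have h1 : (n:ℝ) * ε^2 ≤ -(ε * ∑ i, f (s i)) := by nlinarith
    have h2 : Real.exp ((n:ℝ)*ε^2) ≤ Real.exp (-(ε * ∑ i, f (s i))) := Real.exp_le_exp.mpr h1
    calc (∏ i, μ (s i)) = Real.exp (-(n:ℝ)*ε^2) * ((∏ i, μ (s i)) * Real.exp ((n:ℝ)*ε^2)) := by
          rw [show Real.exp (-(n:ℝ)*ε^2) = Real.exp (-((n:ℝ)*ε^2)) by ring_nf, Real.exp_neg]
          field_simp
      _ ≤ Real.exp (-(n:ℝ)*ε^2) * ((∏ i, μ (s i)) * Real.exp (-(ε * ∑ i, f (s i)))) := by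
          apply mul_le_mul_of_nonneg_left _ (Real.exp_pos _).le
          exact mul_le_mul_of_nonneg_left h2 (hP s)
  calc ∑ s ∈ Finset.univ.filter (fun s : Fin n → Ω => ∑ i, f (s i) < -((n:ℝ) * ε)),
        (∏ i, μ (s i))
      ≤ ∑ s ∈ Finset.univ.filter (fun s : Fin n → Ω => ∑ i, f (s i) < -((n:ℝ) * ε)),
        Real.exp (-(n:ℝ)*ε^2) * ((∏ i, μ (s i)) * Real.exp (-(ε * ∑ i, f (s i)))) :=
        Finset.sum_le_sum hstep
    _ ≤ ∑ s : Fin n → Ω,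
        Real.exp (-(n:ℝ)*ε^2) * ((∏ i, μ (s i)) * Real.exp (-(ε * ∑ i, f (s i)))) := by
        apply Finset.sum_le_sum_of_subset_of_nonneg (Finset.filter_subset _ _)
        intro s _ _
        exact mul_nonneg (Real.exp_pos _).le (mul_nonneg (hP s) (Real.exp_pos _).le)
    _ = Real.exp (-(n:ℝ)*ε^2) * (∑ ω, μ ω * Real.exp (-(ε * f ω))) ^ n := by
        rw [← Finset.mul_sum, iid_mgf]
    _ ≤ Real.exp (-(n:ℝ)*ε^2) * (Real.exp (ε^2/2 - ε * (∑ ω, μ ω * f ω))) ^ n := by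
        apply mul_le_mul_of_nonneg_left _ (Real.exp_pos _).le
        apply pow_le_pow_left₀ _ (mgf_bound μ hμ hs f hf ε)
        apply Finset.sum_nonneg
        intro ω _
        exact mul_nonneg (hμ ω) (Real.exp_pos _).le
    _ ≤ Real.exp (-(n:ℝ)*ε^2) * Real.exp ((n:ℝ) * (ε^2/2)) := by
        apply mul_le_mul_of_nonneg_left _ (Real.exp_pos _).le
        rw [← Real.exp_nat_mul]
        apply Real.exp_le_exp.mpr
        have : 0 ≤ (n:ℝ) * (ε * (∑ ω, μ ω * f ω)) :=
          mul_nonneg (Nat.cast_nonneg n) (mul_nonneg hε.le hmean)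
        nlinarith
    _ = Real.exp (-(n:ℝ) * ε^2 / 2) := by
        rw [← Real.exp_add]
        congr 1
        ring

/-- Existence of a near-obedient `n`-uniform prior (core lemma of the
QPTAS): if `π*` is obedient for `μ*` and `|𝒜|²·exp(−nε²/2) < 1`, then there exists an
`n`-uniform distribution `μ̂` (every coordinate an integer multiple of `1/n`) for which all
obedience constraints are violated by at most `ε`. -/
theorem nuniform_near_obedient_prior_exists
    {Ω 𝒜 : Type*} [Fintype Ω] [Fintype 𝒜] [Nonempty Ω] [Nonempty 𝒜]
    (v : 𝒜 → Ω → ℝ) (hv : ∀ a ω, v a ω ∈ Set.Icc (0:ℝ) 1)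
    (μstar : Ω → ℝ) (hμ : ∀ ω, 0 ≤ μstar ω) (hμsum : ∑ ω, μstar ω = 1)
    (πstar : Ω → 𝒜 → ℝ) (hπ : ∀ ω a, 0 ≤ πstar ω a) (hπsum : ∀ ω, ∑ a, πstar ω a = 1)
    (hobed : ∀ a a', 0 ≤ ∑ ω, μstar ω * πstar ω a * (v a ω - v a' ω))
    (ε : ℝ) (hε : 0 < ε)
    (n : ℕ) (hn : 0 < n)
    (hcard : (Fintype.card 𝒜 : ℝ) ^ 2 * Real.exp (-(n : ℝ) * ε ^ 2 / 2) < 1) :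
    ∃ μhat : Ω → ℝ,
      (∀ ω, 0 ≤ μhat ω) ∧ (∑ ω, μhat ω = 1) ∧
      (∀ ω, ∃ k : ℕ, μhat ω = (k : ℝ) / (n : ℝ)) ∧
      ∀ a a', -ε ≤ ∑ ω, μhat ω * πstar ω a * (v a ω - v a' ω) := by
  classical
  set g : 𝒜 → 𝒜 → Ω → ℝ := fun a a' ω => πstar ω a * (v a ω - v a' ω) with hg
  have hπle1 : ∀ ω a, πstar ω a ≤ 1 := by
    intro ω a
    calc πstar ω a ≤ ∑ a', πstar ω a' :=
          Finset.single_le_sum (fun a' _ => hπ ω a') (Finset.mem_univ a)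
      _ = 1 := hπsum ω
  have hgbdd : ∀ a a' ω, -1 ≤ g a a' ω ∧ g a a' ω ≤ 1 := by
    intro a a' ω
    have h1 := (hv a ω).1; have h2 := (hv a ω).2
    have h3 := (hv a' ω).1; have h4 := (hv a' ω).2
    have h5 := hπ ω a; have h6 := hπle1 ω a
    simp only [hg]
    constructor <;> nlinarith
  have hmean : ∀ a a', 0 ≤ ∑ ω, μstar ω * g a a' ω := by
    intro a a'
    have := hobed a a'
    calc (0:ℝ) ≤ ∑ ω, μstar ω * πstar ω a * (v a ω - v a' ω) := this
      _ = ∑ ω, μstar ω * g a a' ω := by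
          apply Finset.sum_congr rfl; intro ω _; rw [hg]; ring
  -- the total probability is 1
  have hP : ∀ s : Fin n → Ω, 0 ≤ ∏ i, μstar (s i) :=
    fun s => Finset.prod_nonneg fun i _ => hμ (s i)
  have hsum1 : ∑ s : Fin n → Ω, ∏ i, μstar (s i) = 1 := by
    have hpow : (∑ ω, μstar ω) ^ n = ∏ _i : Fin n, (∑ ω, μstar ω) := by
      rw [Finset.prod_const, Finset.card_univ, Fintype.card_fin]
    have : (∑ ω, μstar ω) ^ n = ∑ s : Fin n → Ω, ∏ i, μstar (s i) := by
      rw [hpow, Finset.prod_univ_sum, Fintype.piFinset_univ]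
    rw [← this, hμsum, one_pow]
  -- existence of a good sample
  have hgood : ∃ s : Fin n → Ω, ∀ a a', -((n:ℝ)*ε) ≤ ∑ i, g a a' (s i) := by
    by_contra hcon
    push_neg at hcon
    have h1 : (1:ℝ) ≤ ∑ c : 𝒜 × 𝒜, ∑ s ∈ Finset.univ.filter
        (fun s : Fin n → Ω => ∑ i, g c.1 c.2 (s i) < -((n:ℝ)*ε)), ∏ i, μstar (s i) := by
      calc (1:ℝ) = ∑ s : Fin n → Ω, ∏ i, μstar (s i) := hsum1.symm
        _ ≤ ∑ s : Fin n → Ω, ∑ c : 𝒜 × 𝒜,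
            (if ∑ i, g c.1 c.2 (s i) < -((n:ℝ)*ε) then ∏ i, μstar (s i) else 0) := by
            apply Finset.sum_le_sum
            intro s _
            obtain ⟨a, a', hba⟩ := hcon s
            have hnn : ∀ c : 𝒜 × 𝒜, c ∈ Finset.univ →
                (0:ℝ) ≤ if ∑ i, g c.1 c.2 (s i) < -((n:ℝ)*ε) then ∏ i, μstar (s i) else 0 := by
              intro c _
              split
              · exact hP s
              · exact le_refl 0
            have hle := Finset.single_le_sum hnn (Finset.mem_univ (a, a'))
            rwa [if_pos hba] at hle
        _ = ∑ c : 𝒜 × 𝒜, ∑ s : Fin n → Ω,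
            (if ∑ i, g c.1 c.2 (s i) < -((n:ℝ)*ε) then ∏ i, μstar (s i) else 0) :=
            Finset.sum_comm
        _ = ∑ c : 𝒜 × 𝒜, ∑ s ∈ Finset.univ.filter
            (fun s : Fin n → Ω => ∑ i, g c.1 c.2 (s i) < -((n:ℝ)*ε)), ∏ i, μstar (s i) := by
            apply Finset.sum_congr rfl
            intro c _
            rw [Finset.sum_filter]
    have h2 : ∑ c : 𝒜 × 𝒜, ∑ s ∈ Finset.univ.filter
        (fun s : Fin n → Ω => ∑ i, g c.1 c.2 (s i) < -((n:ℝ)*ε)), (∏ i, μstar (s i))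
        ≤ (Fintype.card 𝒜 : ℝ)^2 * Real.exp (-(n:ℝ) * ε^2 / 2) := by
      calc ∑ c : 𝒜 × 𝒜, ∑ s ∈ Finset.univ.filter
            (fun s : Fin n → Ω => ∑ i, g c.1 c.2 (s i) < -((n:ℝ)*ε)), (∏ i, μstar (s i))
          ≤ ∑ _c : 𝒜 × 𝒜, Real.exp (-(n:ℝ) * ε^2 / 2) := by
            apply Finset.sum_le_sum
            intro c _
            exact chernoff' μstar hμ hμsum (g c.1 c.2) (hgbdd c.1 c.2) (hmean c.1 c.2) ε hε n
        _ = (Fintype.card 𝒜 : ℝ)^2 * Real.exp (-(n:ℝ) * ε^2 / 2) := by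
            rw [Finset.sum_const, Finset.card_univ, Fintype.card_prod, nsmul_eq_mul]
            push_cast
            ring
    linarith
  obtain ⟨s, hsgood⟩ := hgood
  refine ⟨fun ω => ((Finset.univ.filter fun i : Fin n => s i = ω).card : ℝ) / n, ?_, ?_, ?_, ?_⟩
  · intro ω
    positivity
  · rw [← Finset.sum_div]
    rw [div_eq_one_iff_eq (by exact_mod_cast hn.ne')]
    rw [← Nat.cast_sum]
    congr 1
    have := Finset.card_eq_sum_card_fiberwise
      (f := s) (s := Finset.univ) (t := Finset.univ) (fun i _ => Finset.mem_univ (s i))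
    simpa using this.symm
  · intro ω
    exact ⟨_, rfl⟩
  · intro a a'
    have hkey : ∑ i, g a a' (s i)
        = ∑ ω, ((Finset.univ.filter fun i : Fin n => s i = ω).card : ℝ) * g a a' ω := by
      rw [← Finset.sum_fiberwise Finset.univ s (fun i => g a a' (s i))]
      apply Finset.sum_congr rfl
      intro ω _
      rw [Finset.sum_congr rfl (fun i hi => by
        rw [(Finset.mem_filter.mp hi).2]), Finset.sum_const, nsmul_eq_mul]
    have hnpos : (0:ℝ) < n := by exact_mod_cast hn
    have h := hsgood a a'
    rw [hkey] at h
    have : -ε ≤ ∑ ω, ((Finset.univ.filter fun i : Fin n => s i = ω).card : ℝ) / n * g a a' ω := by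
      rw [show ∑ ω, ((Finset.univ.filter fun i : Fin n => s i = ω).card : ℝ) / n * g a a' ω
          = (∑ ω, ((Finset.univ.filter fun i : Fin n => s i = ω).card : ℝ) * g a a' ω) / n by
        rw [Finset.sum_div]; apply Finset.sum_congr rfl; intro ω _; ring]
      rw [le_div_iff₀ hnpos]
      calc -ε * n = -((n:ℝ)*ε) := by ring
        _ ≤ _ := h
    calc -ε ≤ ∑ ω, ((Finset.univ.filter fun i : Fin n => s i = ω).card : ℝ) / n * g a a' ω :=
          this
      _ = ∑ ω, ((Finset.univ.filter fun i : Fin n => s i = ω).card : ℝ) / n * πstar ω a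
            * (v a ω - v a' ω) := by
          apply Finset.sum_congr rfl
          intro ω _
          rw [hg]; ring
end

section
/- Discontinuity of the fixed-scheme sender utility at an indifference prior: let π : Ω → Δ(𝒮) be a signaling scheme with a signal s₀ satisfying π(s₀|ω) > 0 for every ω ∈ Ω. Suppose μ̃ ∈ Δ(Ω) is supported exactly on two distinct states ω₁, ω₂ (μ̃(ω₁) > 0, μ̃(ω₂) > 0, μ̃(ω) = 0 otherwise) and there are actions a₁ ≠ a' such that: (i) Σ_ω μ̃(ω)π(s₀|ω)v(a₁,ω) = Σ_ω μ̃(ω)π(s₀|ω)v(a',ω) > Σ_ω μ̃(ω)π(s₀|ω)v(a,ω) for every a ∉ {a₁, a'}; (ii) v(a₁,ω₁) > v(a',ω₁) and v(a₁,ω₂) < v(a',ω₂); (iii) for every signal s ≠ s₀, the receiver's best response under μ̃ to s is a unique strict maximizer. Then there exists ε₀ > 0 such that for all 0 < ε < ε₀, with μ^{+ε} obtained from μ̃ by moving mass ε from ω₂ to ω₁ and μ^{−ε} by moving mass ε from ω₁ to ω₂, one has U_π(μ^{+ε}) − U_π(μ^{−ε}) = Σ_ω μ₀(ω)π(s₀|ω)(u(a₁,ω)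 − u(a',ω)). Consequently, if this last sum is nonzero, U_π is discontinuous at μ̃. -/
open Finset

/-- Discontinuity of the fixed-scheme sender utility at an indifference
prior: if the prior `μ̃` is supported exactly on `{ω₁, ω₂}`, the receiver is exactly
indifferent between `a₁` and `a'` (both strictly better than all other actions) upon signal
`s₀`, the two actions disagree across the two states, and all other signals have unique
strict best responses, then perturbing the prior by `±ε` along `ω₁, ω₂` changes the sender's
utility by the constant `Σ_ω μ₀(ω)π(s₀|ω)(u(a₁,ω) − u(a',ω))`; if this constant is nonzero,
`U_π` is discontinuous at `μ̃`. -/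
theorem fixed_scheme_sender_utility_discontinuous
    {Ω 𝒜 𝒮 : Type*} [Fintype Ω] [Fintype 𝒜] [Fintype 𝒮]
    [Nonempty Ω] [Nonempty 𝒜] [Nonempty 𝒮] [DecidableEq Ω]
    (u v : 𝒜 → Ω → ℝ)
    (hu : ∀ a ω, u a ω ∈ Set.Icc (0:ℝ) 1)
    (hv : ∀ a ω, v a ω ∈ Set.Icc (0:ℝ) 1)
    (μ₀ : Ω → ℝ) (hμ₀pos : ∀ ω, 0 < μ₀ ω) (hμ₀sum : ∑ ω, μ₀ ω = 1)
    (π : Ω → 𝒮 → ℝ) (hπ : ∀ ω s, 0 ≤ π ω s) (hπsum : ∀ ω, ∑ s, π ω s = 1)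
    -- receiver best response (ties broken in favor of the sender)
    (astar : (Ω → ℝ) → 𝒮 → 𝒜)
    (hbr : ∀ (μ : Ω → ℝ) (s : 𝒮) (a : 𝒜),
      ∑ ω, μ ω * π ω s * v a ω ≤ ∑ ω, μ ω * π ω s * v (astar μ s) ω)
    (htie : ∀ (μ : Ω → ℝ) (s : 𝒮) (a : 𝒜),
      ∑ ω, μ ω * π ω s * v a ω = ∑ ω, μ ω * π ω s * v (astar μ s) ω →
      ∑ ω, μ₀ ω * π ω s * u a ω ≤ ∑ ω, μ₀ ω * π ω s * u (astar μ s) ω)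
    -- the sender's utility as a function of the receiver's prior
    (Uπ : (Ω → ℝ) → ℝ)
    (hU : ∀ μ, Uπ μ = ∑ ω, μ₀ ω * ∑ s, π ω s * u (astar μ s) ω)
    -- a signal sent with positive probability in every state
    (s₀ : 𝒮) (hs₀ : ∀ ω, 0 < π ω s₀)
    -- the indifference prior, supported exactly on two distinct states
    (μt : Ω → ℝ) (hμt : ∀ ω, 0 ≤ μt ω) (hμtsum : ∑ ω, μt ω = 1)
    (ω₁ ω₂ : Ω) (hω : ω₁ ≠ ω₂)
    (hsupp1 : 0 < μt ω₁) (hsupp2 : 0 < μt ω₂)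
    (hsupp : ∀ ω, ω ≠ ω₁ → ω ≠ ω₂ → μt ω = 0)
    -- two actions in exact indifference, strictly above all others, at signal s₀
    (a₁ a' : 𝒜) (ha : a₁ ≠ a')
    (hindiff : ∑ ω, μt ω * π ω s₀ * v a₁ ω = ∑ ω, μt ω * π ω s₀ * v a' ω)
    (hstrict : ∀ a, a ≠ a₁ → a ≠ a' →
      ∑ ω, μt ω * π ω s₀ * v a ω < ∑ ω, μt ω * π ω s₀ * v a₁ ω)
    -- the two actions disagree across the two states
    (hv1 : v a' ω₁ < v a₁ ω₁) (hv2 : v a₁ ω₂ < v a' ω₂)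
    -- every other signal has a unique strict best response under μ̃
    (huniq : ∀ s, s ≠ s₀ → ∃ as : 𝒜, ∀ a, a ≠ as →
      ∑ ω, μt ω * π ω s * v a ω < ∑ ω, μt ω * π ω s * v as ω) :
    (∃ ε₀ > (0:ℝ), ∀ ε : ℝ, 0 < ε → ε < ε₀ →
      Uπ (fun ω => μt ω + (if ω = ω₁ then ε else 0) - (if ω = ω₂ then ε else 0)) -
        Uπ (fun ω => μt ω - (if ω = ω₁ then ε else 0) + (if ω = ω₂ then ε else 0)) =
      ∑ ω, μ₀ ω * π ω s₀ * (u a₁ ω - u a' ω)) ∧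
    ((∑ ω, μ₀ ω * π ω s₀ * (u a₁ ω - u a' ω)) ≠ 0 → ¬ ContinuousAt Uπ μt) := by
  classical
  -- π is bounded by 1
  have hπle1 : ∀ ω s, π ω s ≤ 1 := by
    intro ω s
    calc π ω s ≤ ∑ s', π ω s' :=
          Finset.single_le_sum (fun i _ => hπ ω i) (Finset.mem_univ s)
      _ = 1 := hπsum ω
  -- the perturbation direction has bounded influence
  have hD : ∀ (s : 𝒮) (a : 𝒜), |π ω₁ s * v a ω₁ - π ω₂ s * v a ω₂| ≤ 1 := by
    intro s a
    have h1 := hv a ω₁; have h2 := hv a ω₂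
    have p1 := hπ ω₁ s; have p2 := hπ ω₂ s
    have q1 := hπle1 ω₁ s; have q2 := hπle1 ω₂ s
    rw [abs_le]
    constructor <;> nlinarith [h1.1, h1.2, h2.1, h2.2]
  -- linear perturbation formula
  have pert : ∀ (ε : ℝ) (s : 𝒮) (a : 𝒜),
      ∑ ω, (μt ω + (if ω = ω₁ then ε else 0) - (if ω = ω₂ then ε else 0)) * π ω s * v a ω
      = (∑ ω, μt ω * π ω s * v a ω) + ε * (π ω₁ s * v a ω₁ - π ω₂ s * v a ω₂) := by
    intro ε s a
    have hsplit : ∀ ω, (μt ω + (if ω = ω₁ then ε else 0) - (if ω = ω₂ then ε else 0)) * π ω s * v a ω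
        = μt ω * π ω s * v a ω + (if ω = ω₁ then ε * (π ω s * v a ω) else 0)
          - (if ω = ω₂ then ε * (π ω s * v a ω) else 0) := by
      intro ω; split_ifs <;> ring
    rw [Finset.sum_congr rfl (fun ω _ => hsplit ω), Finset.sum_sub_distrib,
      Finset.sum_add_distrib, Finset.sum_ite_eq' Finset.univ ω₁,
      Finset.sum_ite_eq' Finset.univ ω₂]
    simp only [Finset.mem_univ, if_true]
    ring
  -- the best-response selection
  set A : 𝒮 → 𝒜 := fun s => if h : s = s₀ then a₁ else Classical.choose (huniq s h) with hA
  have hA0 : A s₀ = a₁ := by simp [hA]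
  have hAs : ∀ (s : 𝒮) (hs : s ≠ s₀) (a : 𝒜), a ≠ A s →
      ∑ ω, μt ω * π ω s * v a ω < ∑ ω, μt ω * π ω s * v (A s) ω := by
    intro s hs a hne
    have hAe : A s = Classical.choose (huniq s hs) := by simp only [hA]; rw [dif_neg hs]
    rw [hAe] at hne ⊢
    exact Classical.choose_spec (huniq s hs) a hne
  have hgap0 : ∀ (s : 𝒮) (a : 𝒜), a ≠ A s → (s = s₀ → a ≠ a') →
      0 < (∑ ω, μt ω * π ω s * v (A s) ω) - ∑ ω, μt ω * π ω s * v a ω := by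
    intro s a h1 h2
    by_cases hs : s = s₀
    · subst hs
      rw [hA0] at h1 ⊢
      have := hstrict a h1 (h2 rfl)
      linarith
    · have := hAs s hs a h1; linarith
  -- the minimal gap
  set T : Finset (𝒮 × 𝒜) :=
    Finset.univ.filter (fun p => p.2 ≠ A p.1 ∧ (p.1 = s₀ → p.2 ≠ a')) with hT
  set G : Finset ℝ := insert 1 (T.image (fun p =>
    ((∑ ω, μt ω * π ω p.1 * v (A p.1) ω) - ∑ ω, μt ω * π ω p.1 * v p.2 ω) / 2)) with hG
  have hGne : G.Nonempty := ⟨1, by simp [hG]⟩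
  set ε₀ : ℝ := G.min' hGne with hε₀def
  have hε₀pos : 0 < ε₀ := by
    rw [hε₀def, Finset.lt_min'_iff]
    intro y hy
    rw [hG, Finset.mem_insert] at hy
    rcases hy with rfl | hy
    · norm_num
    · obtain ⟨p, hp, rfl⟩ := Finset.mem_image.mp hy
      obtain ⟨h1, h2⟩ := (Finset.mem_filter.mp hp).2
      have := hgap0 p.1 p.2 h1 h2
      linarith
  have hε₀le : ∀ (s : 𝒮) (a : 𝒜), a ≠ A s → (s = s₀ → a ≠ a') →
      ε₀ ≤ ((∑ ω, μt ω * π ω s * v (A s) ω) - ∑ ω, μt ω * π ω s * v a ω) / 2 := by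
    intro s a h1 h2
    apply Finset.min'_le
    rw [hG]
    exact Finset.mem_insert_of_mem (Finset.mem_image.mpr
      ⟨(s, a), Finset.mem_filter.mpr ⟨Finset.mem_univ _, h1, h2⟩, rfl⟩)
  -- strict dominance forces the best response
  have key : ∀ (μ : Ω → ℝ) (s : 𝒮) (b : 𝒜),
      (∀ a, a ≠ b → ∑ ω, μ ω * π ω s * v a ω < ∑ ω, μ ω * π ω s * v b ω) →
      astar μ s = b := by
    intro μ s b h
    by_contra hne
    exact absurd (hbr μ s b) (not_le.mpr (h (astar μ s) hne))
  -- strict comparison of the two indifferent actions' perturbation direction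
  have hDlt : π ω₁ s₀ * v a' ω₁ - π ω₂ s₀ * v a' ω₂
      < π ω₁ s₀ * v a₁ ω₁ - π ω₂ s₀ * v a₁ ω₂ := by
    nlinarith [mul_pos (hs₀ ω₁) (sub_pos.mpr hv1), mul_pos (hs₀ ω₂) (sub_pos.mpr hv2)]
  -- stability of strict inequalities under small perturbation
  have step : ∀ (η ε : ℝ) (s : 𝒮) (a b : 𝒜), |η| ≤ ε →
      2 * ε < (∑ ω, μt ω * π ω s * v b ω) - (∑ ω, μt ω * π ω s * v a ω) →
      (∑ ω, μt ω * π ω s * v a ω) + η * (π ω₁ s * v a ω₁ - π ω₂ s * v a ω₂)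
        < (∑ ω, μt ω * π ω s * v b ω) + η * (π ω₁ s * v b ω₁ - π ω₂ s * v b ω₂) := by
    intro η ε s a b hη hg
    have hεnn : (0:ℝ) ≤ ε := (abs_nonneg η).trans hη
    have h1 : |η * (π ω₁ s * v a ω₁ - π ω₂ s * v a ω₂)| ≤ ε := by
      rw [abs_mul]
      calc |η| * |π ω₁ s * v a ω₁ - π ω₂ s * v a ω₂| ≤ ε * 1 :=
            mul_le_mul hη (hD s a) (abs_nonneg _) hεnn
        _ = ε := mul_one ε
    have h2 : |η * (π ω₁ s * v b ω₁ - π ω₂ s * v b ω₂)| ≤ ε := by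
      rw [abs_mul]
      calc |η| * |π ω₁ s * v b ω₁ - π ω₂ s * v b ω₂| ≤ ε * 1 :=
            mul_le_mul hη (hD s b) (abs_nonneg _) hεnn
        _ = ε := mul_one ε
    have h1' := (abs_le.mp h1).2
    have h2' := (abs_le.mp h2).1
    linarith
  -- the first (quantitative) claim
  have part1 : ∃ e > (0:ℝ), ∀ ε : ℝ, 0 < ε → ε < e →
      Uπ (fun ω => μt ω + (if ω = ω₁ then ε else 0) - (if ω = ω₂ then ε else 0)) -
        Uπ (fun ω => μt ω - (if ω = ω₁ then ε else 0) + (if ω = ω₂ then ε else 0)) =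
      ∑ ω, μ₀ ω * π ω s₀ * (u a₁ ω - u a' ω) := by
    refine ⟨ε₀, hε₀pos, ?_⟩
    intro ε hε1 hε2
    set μp : Ω → ℝ := fun ω => μt ω + (if ω = ω₁ then ε else 0) - (if ω = ω₂ then ε else 0)
      with hμp
    set μm : Ω → ℝ := fun ω => μt ω - (if ω = ω₁ then ε else 0) + (if ω = ω₂ then ε else 0)
      with hμm
    have hμm' : μm = fun ω => μt ω + (if ω = ω₁ then -ε else 0) - (if ω = ω₂ then -ε else 0) := by
      funext ω; simp only [hμm]; split_ifs <;> ring
    have hfp : ∀ s a, ∑ ω, μp ω * π ω s * v a ω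
        = (∑ ω, μt ω * π ω s * v a ω) + ε * (π ω₁ s * v a ω₁ - π ω₂ s * v a ω₂) := by
      intro s a; simp only [hμp]; exact pert ε s a
    have hfm : ∀ s a, ∑ ω, μm ω * π ω s * v a ω
        = (∑ ω, μt ω * π ω s * v a ω) + (-ε) * (π ω₁ s * v a ω₁ - π ω₂ s * v a ω₂) := by
      intro s a; simp only [hμm']; exact pert (-ε) s a
    have hgapε : ∀ (s : 𝒮) (a : 𝒜), a ≠ A s → (s = s₀ → a ≠ a') →
        2 * ε < (∑ ω, μt ω * π ω s * v (A s) ω) - ∑ ω, μt ω * π ω s * v a ω := by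
      intro s a h1 h2
      have := hε₀le s a h1 h2
      linarith
    have hstarP : ∀ s, astar μp s = A s := by
      intro s
      apply key
      intro a hne
      rw [hfp, hfp]
      by_cases hs : s = s₀
      · rw [hs] at hne ⊢
        by_cases ha' : a = a'
        · subst ha'
          rw [hA0, ← hindiff]
          exact (add_lt_add_iff_left _).mpr ((mul_lt_mul_iff_right₀ hε1).mpr hDlt)
        · exact step ε ε s₀ a (A s₀) (abs_of_pos hε1).le (hgapε s₀ a hne (fun _ => ha'))
      · exact step ε ε s a (A s) (abs_of_pos hε1).le (hgapε s a hne (fun h => absurd h hs))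
    have hstarM : ∀ s, astar μm s = if s = s₀ then a' else A s := by
      intro s
      by_cases hs : s = s₀
      · rw [hs, if_pos rfl]
        apply key
        intro a hne
        rw [hfm, hfm]
        by_cases ha1 : a = a₁
        · subst ha1
          rw [hindiff]
          refine (add_lt_add_iff_left _).mpr ?_
          have : -ε < 0 := neg_neg_of_pos hε1
          exact mul_lt_mul_of_neg_left hDlt this
        · have hg := hgapε s₀ a (by rw [hA0]; exact ha1) (fun _ => hne)
          rw [hA0, hindiff] at hg
          exact step (-ε) ε s₀ a a' (by rw [abs_neg, abs_of_pos hε1]) hg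
      · rw [if_neg hs]
        apply key
        intro a hne
        rw [hfm, hfm]
        exact step (-ε) ε s a (A s) (by rw [abs_neg, abs_of_pos hε1])
          (hgapε s a hne (fun h => absurd h hs))
    -- compute the utility difference
    rw [hU, hU, ← Finset.sum_sub_distrib]
    refine Finset.sum_congr rfl (fun ω _ => ?_)
    rw [← mul_sub, ← Finset.sum_sub_distrib, mul_assoc]
    congr 1
    rw [Finset.sum_eq_single s₀
      (fun s _ hs => by rw [hstarP s, hstarM s, if_neg hs, sub_self])
      (fun h => absurd (Finset.mem_univ s₀) h)]
    rw [hstarP s₀, hstarM s₀, if_pos rfl, hA0, mul_sub]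
  refine ⟨part1, ?_⟩
  -- the discontinuity claim
  intro hc hcont
  obtain ⟨e0, he0, hconst⟩ := part1
  set d : Ω → ℝ := fun ω => (if ω = ω₁ then (1:ℝ) else 0) - (if ω = ω₂ then 1 else 0) with hd
  have hpl : ∀ ε : ℝ,
      (fun ω => μt ω + (if ω = ω₁ then ε else 0) - (if ω = ω₂ then ε else 0)) = μt + ε • d := by
    intro ε; funext ω
    simp only [hd, Pi.add_apply, Pi.smul_apply, smul_eq_mul]
    split_ifs <;> ring
  have hml : ∀ ε : ℝ,
      (fun ω => μt ω - (if ω = ω₁ then ε else 0) + (if ω = ω₂ then ε else 0)) = μt + ε • (-d) := by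
    intro ε; funext ω
    simp only [hd, Pi.add_apply, Pi.smul_apply, Pi.neg_apply, smul_eq_mul]
    split_ifs <;> ring
  have htend : ∀ w : Ω → ℝ,
      Filter.Tendsto (fun ε : ℝ => μt + ε • w) (nhds 0) (nhds μt) := by
    intro w
    have hcw : Continuous (fun ε : ℝ => μt + ε • w) :=
      continuous_const.add (continuous_id.smul continuous_const)
    have := hcw.tendsto 0
    simpa using this
  have hcont1 : Filter.Tendsto (fun ε : ℝ => Uπ (μt + ε • d)) (nhds 0) (nhds (Uπ μt)) :=
    Filter.Tendsto.comp hcont (htend d)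
  have hcont2 : Filter.Tendsto (fun ε : ℝ => Uπ (μt + ε • (-d))) (nhds 0) (nhds (Uπ μt)) :=
    Filter.Tendsto.comp hcont (htend (-d))
  have hdiff : Filter.Tendsto (fun ε : ℝ => Uπ (μt + ε • d) - Uπ (μt + ε • (-d)))
      (nhdsWithin 0 (Set.Ioi 0)) (nhds 0) := by
    have h := hcont1.sub hcont2
    rw [sub_self] at h
    exact h.mono_left nhdsWithin_le_nhds
  have heq : ∀ᶠ ε in nhdsWithin (0:ℝ) (Set.Ioi 0),
      Uπ (μt + ε • d) - Uπ (μt + ε • (-d)) = ∑ ω, μ₀ ω * π ω s₀ * (u a₁ ω - u a' ω) := by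
    filter_upwards [Ioo_mem_nhdsGT_of_mem (Set.mem_Ico.mpr ⟨le_refl 0, he0⟩)] with ε hε
    rw [← hpl ε, ← hml ε]
    exact hconst ε hε.1 hε.2
  have hlim : Filter.Tendsto (fun _ : ℝ => ∑ ω, μ₀ ω * π ω s₀ * (u a₁ ω - u a' ω))
      (nhdsWithin (0:ℝ) (Set.Ioi 0)) (nhds 0) :=
    Filter.Tendsto.congr' heq hdiff
  exact hc (tendsto_nhds_unique hlim tendsto_const_nhds).symm
end

section
/- Near-optimality of joint optimization under a noisy belief oracle: suppose v has inducibility margin D > 0, let C be a finite framing set with belief maps ℓ, ℓ_ε : C → Δ(Ω) satisfying ‖ℓ_ε(c) − ℓ(c)‖₁ ≤ ε for every c ∈ C, and suppose ℓ(c)(ω) ≥ 2p₀ > 0 for every c ∈ C and ω ∈ Ω, where 0 < ε < min{p₀, p₀²D/2}. If c* maximizes U*(ℓ(c)) over c ∈ C and ĉ maximizes U*(ℓ_ε(c)) over c ∈ C, then U*(ℓ_ε(ĉ)) ≥ U*(ℓ_ε(c*)) ≥ U*(ℓ(c*)) − 4ε/(p₀²D); i.e. optimizing against the noisy oracle loses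 at most 4ε/(p₀²D) in perceived sender utility relative to the true optimum. -/
open Finset

lemma ustar_mem_le_one {Ω 𝒜 : Type*} [Fintype Ω] [Fintype 𝒜]
    (u v : 𝒜 → Ω → ℝ) (μ₀ : Ω → ℝ) (μ : Ω → ℝ)
    (hu : ∀ a ω, u a ω ∈ Set.Icc (0:ℝ) 1) (hμ₀ : ∀ ω, 0 ≤ μ₀ ω)
    (hμ₀sum : ∑ ω, μ₀ ω = 1) :
    ∀ r ∈ {r : ℝ | ∃ π : Ω → 𝒜 → ℝ,
      (∀ ω a, 0 ≤ π ω a) ∧ (∀ ω, ∑ a, π ω a = 1) ∧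
      (∀ a a', 0 ≤ ∑ ω, μ ω * π ω a * (v a ω - v a' ω)) ∧
      r = ∑ ω, ∑ a, μ₀ ω * π ω a * u a ω}, r ≤ 1 := by
  rintro r ⟨π, hπ0, hπ1, -, rfl⟩
  calc ∑ ω, ∑ a, μ₀ ω * π ω a * u a ω
      ≤ ∑ ω, ∑ a, μ₀ ω * π ω a * 1 := by
        apply Finset.sum_le_sum; intro ω _
        apply Finset.sum_le_sum; intro a _
        have h0 : 0 ≤ μ₀ ω * π ω a := mul_nonneg (hμ₀ ω) (hπ0 ω a)
        exact mul_le_mul_of_nonneg_left (hu a ω).2 h0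
    _ = 1 := by
        simp only [mul_one, ← Finset.mul_sum]
        simp [hπ1, hμ₀sum]

lemma ustar_bddAbove {Ω 𝒜 : Type*} [Fintype Ω] [Fintype 𝒜]
    (u v : 𝒜 → Ω → ℝ) (μ₀ : Ω → ℝ) (μ : Ω → ℝ)
    (hu : ∀ a ω, u a ω ∈ Set.Icc (0:ℝ) 1) (hμ₀ : ∀ ω, 0 ≤ μ₀ ω)
    (hμ₀sum : ∑ ω, μ₀ ω = 1) :
    BddAbove {r : ℝ | ∃ π : Ω → 𝒜 → ℝ,
      (∀ ω a, 0 ≤ π ω a) ∧ (∀ ω, ∑ a, π ω a = 1) ∧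
      (∀ a a', 0 ≤ ∑ ω, μ ω * π ω a * (v a ω - v a' ω)) ∧
      r = ∑ ω, ∑ a, μ₀ ω * π ω a * u a ω} :=
  ⟨1, fun r hr => ustar_mem_le_one u v μ₀ μ hu hμ₀ hμ₀sum r hr⟩

lemma ustar_nonneg {Ω 𝒜 : Type*} [Fintype Ω] [Fintype 𝒜] [Nonempty 𝒜]
    (u v : 𝒜 → Ω → ℝ) (μ₀ : Ω → ℝ) (μ : Ω → ℝ)
    (hu : ∀ a ω, u a ω ∈ Set.Icc (0:ℝ) 1) (hμ₀ : ∀ ω, 0 ≤ μ₀ ω)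
    (hμ₀sum : ∑ ω, μ₀ ω = 1) (hμ : ∀ ω, 0 ≤ μ ω) :
    0 ≤ Ustar u v μ₀ μ := by
  classical
  have hamax : ∀ ω : Ω, ∃ a : 𝒜, ∀ a' : 𝒜, v a' ω ≤ v a ω := by
    intro ω
    obtain ⟨a, -, ha⟩ := Finset.exists_max_image Finset.univ (fun a => v a ω)
      Finset.univ_nonempty
    exact ⟨a, fun a' => ha a' (Finset.mem_univ _)⟩
  choose amax hA using hamax
  set π₀ : Ω → 𝒜 → ℝ := fun ω a => if a = amax ω then 1 else 0 with hπ₀def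
  have hmem : (∑ ω, ∑ a, μ₀ ω * π₀ ω a * u a ω) ∈ {r : ℝ | ∃ π : Ω → 𝒜 → ℝ,
      (∀ ω a, 0 ≤ π ω a) ∧ (∀ ω, ∑ a, π ω a = 1) ∧
      (∀ a a', 0 ≤ ∑ ω, μ ω * π ω a * (v a ω - v a' ω)) ∧
      r = ∑ ω, ∑ a, μ₀ ω * π ω a * u a ω} := by
    refine ⟨π₀, ?_, ?_, ?_, rfl⟩
    · intro ω a; simp only [hπ₀def]; split <;> norm_num
    · intro ω; simp [hπ₀def]
    · intro a a'
      apply Finset.sum_nonneg; intro ω _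
      simp only [hπ₀def]
      by_cases h : a = amax ω
      · rw [if_pos h, mul_one]
        subst h
        exact mul_nonneg (hμ ω) (sub_nonneg.2 (hA ω a'))
      · rw [if_neg h]; simp
  have hle := le_csSup (ustar_bddAbove u v μ₀ μ hu hμ₀ hμ₀sum) hmem
  have h0 : 0 ≤ ∑ ω, ∑ a, μ₀ ω * π₀ ω a * u a ω := by
    apply Finset.sum_nonneg; intro ω _
    apply Finset.sum_nonneg; intro a _
    exact mul_nonneg (mul_nonneg (hμ₀ ω) (by simp only [hπ₀def]; split <;> norm_num))
      (hu a ω).1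
  exact le_trans h0 hle

/-- Key perturbation bound: `U*` changes by at most `ε/p₀` under an `ℓ¹`-perturbation of
size `ε < p₀` of a prior bounded below by `2p₀`. -/
lemma ustar_perturb {Ω 𝒜 : Type*} [Fintype Ω] [Fintype 𝒜] [Nonempty 𝒜]
    (u v : 𝒜 → Ω → ℝ)
    (hu : ∀ a ω, u a ω ∈ Set.Icc (0:ℝ) 1)
    (μ₀ : Ω → ℝ) (hμ₀ : ∀ ω, 0 ≤ μ₀ ω) (hμ₀sum : ∑ ω, μ₀ ω = 1)
    (μ μ' : Ω → ℝ) (p₀ ε : ℝ) (hp₀ : 0 < p₀) (hε0 : 0 < ε) (hεp : ε < p₀)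
    (hμlb : ∀ ω, 2 * p₀ ≤ μ ω)
    (hnoise : ∑ ω, |μ' ω - μ ω| ≤ ε) :
    Ustar u v μ₀ μ ≤ Ustar u v μ₀ μ' + ε / p₀ := by
  classical
  have hpt : ∀ ω, |μ' ω - μ ω| ≤ ε := by
    intro ω
    exact le_trans (Finset.single_le_sum (f := fun ω => |μ' ω - μ ω|)
      (fun i _ => abs_nonneg _) (Finset.mem_univ ω)) hnoise
  have hμ'lb : ∀ ω, p₀ < μ' ω := by
    intro ω
    have h1 := (abs_le.1 (hpt ω)).1
    have h2 := hμlb ω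
    linarith
  have hμ'pos : ∀ ω, 0 < μ' ω := fun ω => lt_trans hp₀ (hμ'lb ω)
  have hμ'ub : ∀ ω, μ' ω ≤ μ ω + ε := by
    intro ω; have := (abs_le.1 (hpt ω)).2; linarith
  set c : ℝ := ε / (2 * p₀) with hcdef
  have hc0 : 0 ≤ c := by positivity
  have hc2 : 2 * p₀ * c = ε := by rw [hcdef]; field_simp
  have hc1 : c < 1 := by
    rw [hcdef, div_lt_one (by positivity)]; linarith
  -- argmax of v at each state
  have hamax : ∀ ω : Ω, ∃ a : 𝒜, ∀ a' : 𝒜, v a' ω ≤ v a ω := by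
    intro ω
    obtain ⟨a, -, ha⟩ := Finset.exists_max_image Finset.univ (fun a => v a ω)
      Finset.univ_nonempty
    exact ⟨a, fun a' => ha a' (Finset.mem_univ _)⟩
  choose amax hA using hamax
  have hμ'nonneg : ∀ ω, 0 ≤ μ' ω := fun ω => (hμ'pos ω).le
  unfold Ustar
  apply Real.sSup_le
  swap
  · have := ustar_nonneg u v μ₀ μ' hu hμ₀ hμ₀sum hμ'nonneg
    unfold Ustar at this
    have hε' : 0 ≤ ε / p₀ := by positivity
    linarith
  rintro r ⟨π, hπ0, hπ1, hob, rfl⟩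
  -- constructed perturbed scheme
  set π' : Ω → 𝒜 → ℝ := fun ω a =>
    ((1 - c) * (μ ω * π ω a) + (μ' ω - (1 - c) * μ ω) * (if a = amax ω then 1 else 0))
      / μ' ω with hπ'def
  have hrr : ∀ ω, 0 ≤ μ' ω - (1 - c) * μ ω := by
    intro ω
    have h1 := (abs_le.1 (hpt ω)).1
    have h2 := hμlb ω
    have h3 : c * (2 * p₀) ≤ c * μ ω := mul_le_mul_of_nonneg_left h2 hc0
    nlinarith
  have hite0 : ∀ ω (a : 𝒜), (0:ℝ) ≤ (if a = amax ω then 1 else 0) := by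
    intro ω a; split <;> norm_num
  have hπ'0 : ∀ ω a, 0 ≤ π' ω a := by
    intro ω a
    apply div_nonneg _ (hμ'nonneg ω)
    apply add_nonneg
    · apply mul_nonneg (by linarith) (mul_nonneg (by linarith [hμlb ω, hp₀]) (hπ0 ω a))
    · exact mul_nonneg (hrr ω) (hite0 ω a)
  have hπ'1 : ∀ ω, ∑ a, π' ω a = 1 := by
    intro ω
    have hne : μ' ω ≠ 0 := ne_of_gt (hμ'pos ω)
    simp only [hπ'def]
    rw [← Finset.sum_div, div_eq_one_iff_eq hne, Finset.sum_add_distrib,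
      ← Finset.mul_sum, ← Finset.mul_sum, ← Finset.mul_sum]
    simp [hπ1 ω]
  have hcancel : ∀ ω (a : 𝒜), μ' ω * π' ω a =
      (1 - c) * (μ ω * π ω a) + (μ' ω - (1 - c) * μ ω) * (if a = amax ω then 1 else 0) := by
    intro ω a
    simp only [hπ'def]
    rw [mul_comm, div_mul_cancel₀ _ (ne_of_gt (hμ'pos ω))]
  have hob' : ∀ a a', 0 ≤ ∑ ω, μ' ω * π' ω a * (v a ω - v a' ω) := by
    intro a a'
    have hterm : ∀ ω, μ' ω * π' ω a * (v a ω - v a' ω) =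
        (1 - c) * (μ ω * π ω a * (v a ω - v a' ω)) +
        (μ' ω - (1 - c) * μ ω) * (if a = amax ω then 1 else 0) * (v a ω - v a' ω) := by
      intro ω; rw [hcancel ω a]; ring
    rw [Finset.sum_congr rfl (fun ω _ => hterm ω), Finset.sum_add_distrib,
      ← Finset.mul_sum]
    apply add_nonneg
    · exact mul_nonneg (by linarith) (hob a a')
    · apply Finset.sum_nonneg; intro ω _
      by_cases h : a = amax ω
      · rw [if_pos h, mul_one]
        subst h
        exact mul_nonneg (hrr ω) (sub_nonneg.2 (hA ω a'))
      · rw [if_neg h]; simp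
  have hmem : (∑ ω, ∑ a, μ₀ ω * π' ω a * u a ω) ∈ {r : ℝ | ∃ π : Ω → 𝒜 → ℝ,
      (∀ ω a, 0 ≤ π ω a) ∧ (∀ ω, ∑ a, π ω a = 1) ∧
      (∀ a a', 0 ≤ ∑ ω, μ' ω * π ω a * (v a ω - v a' ω)) ∧
      r = ∑ ω, ∑ a, μ₀ ω * π ω a * u a ω} :=
    ⟨π', hπ'0, hπ'1, hob', rfl⟩
  have hle := le_csSup (ustar_bddAbove u v μ₀ μ' hu hμ₀ hμ₀sum) hmem
  -- sender-utility comparison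
  have htw : ∀ ω (a : 𝒜), (1 - c) * (1 - c) * (μ₀ ω * π ω a * u a ω) ≤
      μ₀ ω * π' ω a * u a ω := by
    intro ω a
    have hπ'ge : (1 - c) * (1 - c) * π ω a ≤ π' ω a := by
      simp only [hπ'def]
      rw [le_div_iff₀ (hμ'pos ω)]
      have h1 : (1 - c) * μ' ω ≤ μ ω := by
        have h2 := hμ'ub ω
        have h3 : c * (2 * p₀) ≤ c * μ ω := mul_le_mul_of_nonneg_left (hμlb ω) hc0
        nlinarith
      have h4 : 0 ≤ (1 - c) * π ω a := mul_nonneg (by linarith) (hπ0 ω a)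
      have h5 := mul_le_mul_of_nonneg_left h1 h4
      have h6 : 0 ≤ (μ' ω - (1 - c) * μ ω) * (if a = amax ω then 1 else 0) :=
        mul_nonneg (hrr ω) (hite0 ω a)
      nlinarith
    have h7 := mul_le_mul_of_nonneg_right
      (mul_le_mul_of_nonneg_left hπ'ge (hμ₀ ω)) (hu a ω).1
    calc (1 - c) * (1 - c) * (μ₀ ω * π ω a * u a ω)
        = μ₀ ω * ((1 - c) * (1 - c) * π ω a) * u a ω := by ring
      _ ≤ μ₀ ω * π' ω a * u a ω := h7
  have hsum : (1 - c) * (1 - c) * (∑ ω, ∑ a, μ₀ ω * π ω a * u a ω) ≤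
      ∑ ω, ∑ a, μ₀ ω * π' ω a * u a ω := by
    calc (1 - c) * (1 - c) * (∑ ω, ∑ a, μ₀ ω * π ω a * u a ω)
        = ∑ ω, ∑ a, (1 - c) * (1 - c) * (μ₀ ω * π ω a * u a ω) := by
          rw [Finset.mul_sum]
          exact Finset.sum_congr rfl fun ω _ => by rw [Finset.mul_sum]
      _ ≤ ∑ ω, ∑ a, μ₀ ω * π' ω a * u a ω := by
          apply Finset.sum_le_sum; intro ω _
          apply Finset.sum_le_sum; intro a _
          exact htw ω a
  have hr0 : 0 ≤ ∑ ω, ∑ a, μ₀ ω * π ω a * u a ω := by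
    apply Finset.sum_nonneg; intro ω _
    apply Finset.sum_nonneg; intro a _
    exact mul_nonneg (mul_nonneg (hμ₀ ω) (hπ0 ω a)) (hu a ω).1
  have hr1 : (∑ ω, ∑ a, μ₀ ω * π ω a * u a ω) ≤ 1 :=
    ustar_mem_le_one u v μ₀ μ hu hμ₀ hμ₀sum _ ⟨π, hπ0, hπ1, hob, rfl⟩
  have h2c : ε / p₀ = 2 * c := by rw [hcdef]; field_simp
  set R := ∑ ω, ∑ a, μ₀ ω * π ω a * u a ω
  have hfinal : R - ε / p₀ ≤ (1 - c) * (1 - c) * R := by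
    rw [h2c]
    nlinarith [mul_nonneg hc0 (sub_nonneg.2 hr1), mul_nonneg (mul_nonneg hc0 hc0) hr0]
  linarith

/-- Near-optimality of joint optimization under a noisy belief oracle:
if `v` has inducibility margin `D > 0`, the true belief map `ℓ` has full support bounded
below by `2p₀`, the noisy oracle `ℓ_ε` is within `ε` of `ℓ` in `ℓ¹`, and
`0 < ε < min{p₀, p₀²D/2}`, then for `c*` maximizing `U*(ℓ(·))` and `ĉ` maximizing
`U*(ℓ_ε(·))` one has `U*(ℓ_ε(ĉ)) ≥ U*(ℓ_ε(c*)) ≥ U*(ℓ(c*)) − 4ε/(p₀²D)`. -/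
theorem noisy_oracle_joint_near_optimal
    {Ω 𝒜 C : Type*} [Fintype Ω] [Fintype 𝒜] [Fintype C]
    [Nonempty Ω] [Nonempty 𝒜] [Nonempty C]
    (u v : 𝒜 → Ω → ℝ)
    (hu : ∀ a ω, u a ω ∈ Set.Icc (0:ℝ) 1)
    (hv : ∀ a ω, v a ω ∈ Set.Icc (0:ℝ) 1)
    (μ₀ : Ω → ℝ) (hμ₀pos : ∀ ω, 0 < μ₀ ω) (hμ₀sum : ∑ ω, μ₀ ω = 1)
    -- inducibility margin D
    (D : ℝ) (hD : 0 < D)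
    (hmargin : ∀ a : 𝒜, ∃ η : Ω → ℝ, (∀ ω, 0 ≤ η ω) ∧ (∑ ω, η ω = 1) ∧
      ∀ a', a' ≠ a → D ≤ ∑ ω, η ω * (v a ω - v a' ω))
    -- belief maps: true oracle ℓ and noisy oracle ℓε
    (ℓ ℓε : C → Ω → ℝ)
    (hℓpos : ∀ c ω, 0 ≤ ℓ c ω) (hℓsum : ∀ c, ∑ ω, ℓ c ω = 1)
    (hℓεpos : ∀ c ω, 0 ≤ ℓε c ω) (hℓεsum : ∀ c, ∑ ω, ℓε c ω = 1)
    (p₀ ε : ℝ) (hp₀ : 0 < p₀)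
    (hnoise : ∀ c, ∑ ω, |ℓε c ω - ℓ c ω| ≤ ε)
    (hlb : ∀ c ω, 2 * p₀ ≤ ℓ c ω)
    (hε0 : 0 < ε) (hεlt : ε < min p₀ (p₀ ^ 2 * D / 2))
    -- c* maximizes the true objective, ĉ maximizes the perceived objective
    (cstar chat : C)
    (hcstar : ∀ c, Ustar u v μ₀ (ℓ c) ≤ Ustar u v μ₀ (ℓ cstar))
    (hchat : ∀ c, Ustar u v μ₀ (ℓε c) ≤ Ustar u v μ₀ (ℓε chat)) :
    Ustar u v μ₀ (ℓε cstar) ≤ Ustar u v μ₀ (ℓε chat) ∧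
    Ustar u v μ₀ (ℓ cstar) - 4 * ε / (p₀ ^ 2 * D) ≤ Ustar u v μ₀ (ℓε cstar) := by
  refine ⟨hchat cstar, ?_⟩
  rcases subsingleton_or_nontrivial 𝒜 with hsub | hnt
  · -- with a single action, obedience is vacuous and `Ustar` does not depend on the prior
    have heq : Ustar u v μ₀ (ℓε cstar) = Ustar u v μ₀ (ℓ cstar) := by
      unfold Ustar
      congr 1
      ext r
      constructor <;> rintro ⟨π, h0, h1, hob, rfl⟩ <;>
        exact ⟨π, h0, h1, fun a a' => by
          rw [Subsingleton.elim a' a]; simp, rfl⟩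
    have hpos : 0 < 4 * ε / (p₀ ^ 2 * D) := by positivity
    linarith
  · have hεp : ε < p₀ := lt_of_lt_of_le hεlt (min_le_left _ _)
    have hperturb := ustar_perturb u v hu μ₀ (fun ω => (hμ₀pos ω).le) hμ₀sum
      (ℓ cstar) (ℓε cstar) p₀ ε hp₀ hε0 hεp (hlb cstar) (hnoise cstar)
    have hkey : ε / p₀ ≤ 4 * ε / (p₀ ^ 2 * D) := by
      obtain ⟨a, b, hab⟩ := exists_pair_ne 𝒜
      obtain ⟨η, hη0, hη1, hηD⟩ := hmargin a
      have hD1 : D ≤ 1 := by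
        calc D ≤ ∑ ω, η ω * (v a ω - v b ω) := hηD b (Ne.symm hab)
          _ ≤ ∑ ω, η ω * 1 := by
              apply Finset.sum_le_sum; intro ω _
              apply mul_le_mul_of_nonneg_left _ (hη0 ω)
              have h1 := (hv a ω).2
              have h2 := (hv b ω).1
              linarith
          _ = 1 := by simp [hη1]
      have hp₀half : p₀ ≤ 1 / 2 := by
        obtain ⟨ω⟩ := ‹Nonempty Ω›
        have h1 : ℓ cstar ω ≤ 1 := by
          have h2 := Finset.single_le_sum (f := ℓ cstar)
            (fun i _ => hℓpos cstar i) (Finset.mem_univ ω)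
          rw [hℓsum cstar] at h2
          exact h2
        linarith [hlb cstar ω]
      rw [div_le_div_iff₀ hp₀ (by positivity)]
      nlinarith [mul_pos hε0 hp₀, mul_le_mul hp₀half hD1 hD.le (by norm_num : (0:ℝ) ≤ 1/2)]
    linarith
end
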